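/- arXiv:1804.05629 — 5 statements merged into one kernel-verified Lean document; each statement's English description precedes it below -/
import Mathlib

section
/- Let D be a triangulated category with a t-structure with heart A. For objects X, Y in A, the canonical map θ^1 : Yext^1_A(X, Y) → Hom_D(X, Σ(Y)), sending the class of a short exact sequence 0 → Y → E → X → 0 to the connecting morphism of the corresponding exact triangle Y → E → X → Σ(Y), is a bijection (an isomorphism of groups). -/
open CategoryTheory Category Limits Pretriangulated Triangulated ZeroObject

namespace HRS

variable (A : Type*) [Category A] [Abelian A]

/-- A short exact sequence `0 ⟶ Y ⟶ E ⟶ X ⟶ 0` in `A`, i.e. an extension of `X` by `Y`. -/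
structure SES (X Y : A) where
  E : A
  i : Y ⟶ E
  p : E ⟶ X
  w : i ≫ p = 0
  ex : (ShortComplex.mk i p w).ShortExact

/-- A torsion pair `(T, F)` in the abelian category `A`. -/
structure TorsionPair (T F : A → Prop) : Prop where
  hom_zero : ∀ ⦃t f : A⦄, T t → F f → ∀ (g : t ⟶ f), g = 0
  exists_ses : ∀ X : A, ∃ (t f : A) (i : t ⟶ X) (p : X ⟶ f) (w : i ≫ p = 0),
    T t ∧ F f ∧ (ShortComplex.mk i p w).ShortExact

/-- `n`-fold Yoneda extensions of `X` by `Y`, presented as iterated splices of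
short exact sequences. -/
inductive ExtSeq : ℕ → A → A → Type _
  | base {X Y : A} (s : SES A X Y) : ExtSeq 1 X Y
  | splice {n : ℕ} {X Y Z : A} (s : SES A Z Y) (ξ : ExtSeq n X Z) : ExtSeq (n + 1) X Y

/-- Morphisms of Yoneda extensions over a pair of morphisms on the two end terms. -/
inductive ExtHom : ∀ {n : ℕ} {X X' Y Y' : A}, (Y ⟶ Y') → (X ⟶ X') →
    ExtSeq A n X Y → ExtSeq A n X' Y' → Prop
  | base {X X' Y Y' : A} {a : Y ⟶ Y'} {b : X ⟶ X'} (s : SES A X Y) (s' : SES A X' Y')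
      (e : s.E ⟶ s'.E) (h1 : s.i ≫ e = a ≫ s'.i) (h2 : s.p ≫ b = e ≫ s'.p) :
      ExtHom a b (.base s) (.base s')
  | splice {n : ℕ} {X X' Y Y' Z Z' : A} {a : Y ⟶ Y'} {b : X ⟶ X'} (t : Z ⟶ Z')
      (s : SES A Z Y) (s' : SES A Z' Y') (ξ : ExtSeq A n X Z) (ξ' : ExtSeq A n X' Z')
      (e : s.E ⟶ s'.E) (h1 : s.i ≫ e = a ≫ s'.i) (h2 : s.p ≫ t = e ≫ s'.p)
      (h : ExtHom t b ξ ξ') :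
      ExtHom a b (.splice s ξ) (.splice s' ξ')

/-- The Yoneda equivalence relation on `n`-fold extensions of `X` by `Y`: the equivalence
relation generated by the existence of a morphism of extensions which is the identity
on both end terms. -/
def ExtEquiv {n : ℕ} {X Y : A} (ξ ξ' : ExtSeq A n X Y) : Prop :=
  Relation.EqvGen (fun ζ ζ' => ExtHom A (𝟙 Y) (𝟙 X) ζ ζ') ξ ξ'

/-- The `n`-th Yoneda extension group (as a set) `Yext^n_A(X, Y)`. -/
def Yext (n : ℕ) (X Y : A) : Type _ :=
  Quot (fun ξ ξ' : ExtSeq A n X Y => ExtHom A (𝟙 Y) (𝟙 X) ξ ξ')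

/-- The class of an extension in `Yext`. -/
def Yext.mk {n : ℕ} {X Y : A} (ξ : ExtSeq A n X Y) : Yext A n X Y := Quot.mk _ ξ

/-- The short exact sequence `0 ⟶ Y ⟶ Y ⟶ 0 ⟶ 0`. -/
noncomputable def sesToZero (Y : A) : SES A (0 : A) Y where
  E := Y
  i := 𝟙 Y
  p := 0
  w := by simp
  ex := (ShortComplex.Splitting.shortExact
    { r := 𝟙 Y
      s := 0
      f_r := by simp
      s_g := by apply Subsingleton.elim
      id := by simp })

/-- The short exact sequence `0 ⟶ 0 ⟶ 0 ⟶ 0 ⟶ 0`. -/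
noncomputable def sesZero : SES A (0 : A) (0 : A) where
  E := 0
  i := 0
  p := 0
  w := by simp
  ex := (ShortComplex.Splitting.shortExact
    { r := 0
      s := 0
      f_r := by apply Subsingleton.elim
      s_g := by apply Subsingleton.elim
      id := by apply Subsingleton.elim })

/-- The short exact sequence `0 ⟶ 0 ⟶ X ⟶ X ⟶ 0`. -/
noncomputable def sesFromZero (X : A) : SES A X (0 : A) where
  E := X
  i := 0
  p := 𝟙 X
  w := by simp
  ex := (ShortComplex.Splitting.shortExact
    { r := 0
      s := 𝟙 X
      f_r := by apply Subsingleton.elim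
      s_g := by simp
      id := by simp })

/-- The trivial 3-fold extension `0 → Y → Y → 0 → X → X → 0`, representing the zero
class in `Yext^3_A(X, Y)`. -/
noncomputable def trivialExt3 (X Y : A) : ExtSeq A 3 X Y :=
  ExtSeq.splice (sesToZero A Y) (ExtSeq.splice (sesZero A) (ExtSeq.base (sesFromZero A X)))

/-- `Sub P`: subobjects of objects satisfying `P`. -/
def SubP (P : A → Prop) (X : A) : Prop := ∃ (U : A) (m : X ⟶ U), P U ∧ Mono m

/-- `Fac P`: quotient objects of objects satisfying `P`. -/
def FacP (P : A → Prop) (X : A) : Prop := ∃ (U : A) (p : U ⟶ X), P U ∧ Epi p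

/-- `P * Q`: objects that are extensions of an object satisfying `Q` by one satisfying `P`. -/
def StarP (P Q : A → Prop) (X : A) : Prop :=
  ∃ (u v : A) (i : u ⟶ X) (p : X ⟶ v) (w : i ≫ p = 0),
    P u ∧ Q v ∧ (ShortComplex.mk i p w).ShortExact

variable (D : Type*) [Category D] [HasZeroObject D] [Preadditive D] [HasShift D ℤ]
  [∀ n : ℤ, (shiftFunctor D n).Additive] [Pretriangulated D]

/-- The heart of a t-structure, as a predicate on objects. -/
def heartProp (t : TStructure D) (X : D) : Prop := t.le 0 X ∧ t.ge 0 X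

/-- A t-structure is bounded if every object lies in some `Σ^i D^{≤0} ∩ Σ^j D^{≥0}`. -/
def IsBoundedTStructure (t : TStructure D) : Prop := ∀ X : D, ∃ a b : ℤ, t.ge a X ∧ t.le b X

/-- Data realizing an abelian category `A` as the heart of a t-structure `t` on `D`:
a fully faithful additive functor `A ⥤ D` whose essential image is the heart of `t`. -/
structure HeartData (t : TStructure D) where
  ι : A ⥤ D
  additive : ι.Additive
  full : ι.Full
  faithful : ι.Faithful
  essImage_iff : ∀ X : D, ι.essImage X ↔ heartProp D t X

variable {A D}

/-- The property, for a family `θ` of maps from `n`-fold Yoneda extensions in the heart to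
`Hom_D(X, Σ^n Y)`, of being the canonical family: it descends to the Yoneda extension
groups, `θ^1` sends a short exact sequence to the connecting morphism of an associated
distinguished triangle, and `θ^{n+1}` is computed on splices by `Σ^n(θ^1 ξ₁) ∘ θ^n ξ₂`. -/
structure IsCanThetaFamily {t : TStructure D} (h : HeartData A D t)
    (θ : ∀ (n : ℕ) (X Y : A), ExtSeq A n X Y → (h.ι.obj X ⟶ (h.ι.obj Y)⟦(n : ℤ)⟧)) : Prop where
  compat : ∀ {n : ℕ} {X Y : A} (ξ ξ' : ExtSeq A n X Y), ExtEquiv A ξ ξ' →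
    θ n X Y ξ = θ n X Y ξ'
  base : ∀ {X Y : A} (s : SES A X Y),
    Triangle.mk (h.ι.map s.i) (h.ι.map s.p)
      (θ 1 X Y (.base s) ≫ eqToHom (by norm_num)) ∈ distTriang D
  splice : ∀ {n : ℕ} {X Y Z : A} (s : SES A Z Y) (ξ : ExtSeq A n X Z),
    θ (n + 1) X Y (.splice s ξ) = θ n X Z ξ ≫ (θ 1 Z Y (.base s))⟦(n : ℤ)⟧' ≫
      (shiftFunctorAdd' D ((1 : ℕ) : ℤ) ((n : ℕ) : ℤ) (((n + 1 : ℕ)) : ℤ)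
        (by push_cast; ring)).inv.app (h.ι.obj Y)

/-- The map induced by `θ^n` on the Yoneda extension group `Yext^n(X, Y)`. -/
def thetaBar {t : TStructure D} {h : HeartData A D t}
    (θ : ∀ (n : ℕ) (X Y : A), ExtSeq A n X Y → (h.ι.obj X ⟶ (h.ι.obj Y)⟦(n : ℤ)⟧))
    (hθ : IsCanThetaFamily h θ) (n : ℕ) (X Y : A) :
    Yext A n X Y → (h.ι.obj X ⟶ (h.ι.obj Y)⟦(n : ℤ)⟧) :=
  Quot.lift (θ n X Y) (fun ξ ξ' hr => hθ.compat ξ ξ' (Relation.EqvGen.rel _ _ hr))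

variable (A D)

/-- The image of a short exact sequence under an exact functor. -/
def mapSES {A' : Type*} [Category A'] [Abelian A'] (G : A' ⥤ A) [G.Additive]
    (hG : ∀ S : ShortComplex A', S.ShortExact → (S.map G).ShortExact)
    {X Y : A'} (s : SES A' X Y) : SES A (G.obj X) (G.obj Y) where
  E := G.obj s.E
  i := G.map s.i
  p := G.map s.p
  w := by rw [← G.map_comp, s.w]; exact G.map_zero _ _
  ex := hG _ s.ex

/-- The image of a Yoneda extension under an exact functor. -/
def mapExtSeq {A' : Type*} [Category A'] [Abelian A'] (G : A' ⥤ A) [G.Additive]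
    (hG : ∀ S : ShortComplex A', S.ShortExact → (S.map G).ShortExact) :
    ∀ {n : ℕ} {X Y : A'}, ExtSeq A' n X Y → ExtSeq A n (G.obj X) (G.obj Y)
  | _, _, _, .base s => .base (mapSES A G hG s)
  | _, _, _, .splice s ξ => .splice (mapSES A G hG s) (mapExtSeq G hG ξ)

/-- Composition of a chain of morphisms `Σ^i X_i ⟶ Σ^{i+1} X_{i+1}` in `D`,
with all `X_i` in the heart. -/
def chainComp (ι : A ⥤ D) (obj : ℕ → A)
    (g : ∀ i : ℕ, ((ι.obj (obj i))⟦((i : ℕ) : ℤ)⟧ ⟶ (ι.obj (obj (i + 1)))⟦(((i + 1 : ℕ)) : ℤ)⟧)) :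
    ∀ n : ℕ, ((ι.obj (obj 0))⟦((0 : ℕ) : ℤ)⟧ ⟶ (ι.obj (obj n))⟦((n : ℕ) : ℤ)⟧)
  | 0 => 𝟙 _
  | n + 1 => chainComp ι obj g n ≫ g n

/-- A model of the bounded derived category `D^b(A)` of an abelian category `A`:
a triangulated category equipped with a bounded t-structure whose heart is `A`,
such that the canonical maps `Yext^n_A(X, Y) → Hom(X, Σ^n Y)` are bijective for all
`n ≥ 1` (the characteristic-class isomorphisms of the bounded derived category). -/
structure DerivedData where
  t : TStructure D
  bounded : IsBoundedTStructure D t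
  heart : HeartData A D t
  θ : ∀ (n : ℕ) (X Y : A), ExtSeq A n X Y → (heart.ι.obj X ⟶ (heart.ι.obj Y)⟦(n : ℤ)⟧)
  can : IsCanThetaFamily heart θ
  bij : ∀ (n : ℕ), 1 ≤ n → ∀ (X Y : A), Function.Bijective (thetaBar θ can n X Y)

variable {A D}

/-- Membership in the HRS-tilt `B = Σ(F) * T` of `A` with respect to a torsion pair
`(T, F)`, for an object of (a model of) `D^b(A)`. -/
def HRSTiltMem {t : TStructure D} (h : HeartData A D t) (T F : A → Prop) (X : D) : Prop :=
  ∃ (f tt : A), F f ∧ T tt ∧ ∃ (g : (h.ι.obj f)⟦(1 : ℤ)⟧ ⟶ X) (g' : X ⟶ h.ι.obj tt)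
    (δ : h.ι.obj tt ⟶ ((h.ι.obj f)⟦(1 : ℤ)⟧)⟦(1 : ℤ)⟧), Triangle.mk g g' δ ∈ distTriang D

section TAux

variable {D : Type*} [Category D] [HasZeroObject D] [Preadditive D] [HasShift D ℤ]
  [∀ n : ℤ, (shiftFunctor D n).Additive] [Pretriangulated D] (t : TStructure D)

lemma zero_of {X Y : D} (f : X ⟶ Y) (a b : ℤ) (hX : t.le a X) (hY : t.ge b Y)
    (hab : a < b) : f = 0 := by
  apply (shiftFunctor D a).map_injective
  rw [Functor.map_zero]
  exact t.zero' _ (t.le_shift a a 0 (by omega) X hX)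
    (t.ge_antitone (show (1 : ℤ) ≤ b - a by omega) _
      (t.ge_shift b a (b - a) (by omega) Y hY))

lemma le₂ (T : Triangle D) (hT : T ∈ distTriang D) (h₁ : t.le 0 T.obj₁)
    (h₃ : t.le 0 T.obj₃) : t.le 0 T.obj₂ := by
  obtain ⟨A, B, hA, hB, f, g, δ, mem⟩ := t.exists_triangle T.obj₂ 0 1 rfl
  have hg : g = 0 := by
    obtain ⟨ψ, hψ⟩ := Triangle.yoneda_exact₂ T hT g (t.zero' _ h₁ hB)
    rw [hψ, t.zero' ψ h₃ hB, comp_zero]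
  have hB0 : IsZero B := by
    obtain ⟨ψ, hψ⟩ := Triangle.yoneda_exact₃ _ mem (𝟙 B) (by show g ≫ 𝟙 B = 0; rw [hg, zero_comp])
    rw [IsZero.iff_id_eq_zero, hψ,
      zero_of t ψ (-1) 1 (t.le_shift 0 1 (-1) (by omega) A hA) hB (by omega), comp_zero]; rfl
  have : IsIso f := (Triangle.isZero₃_iff_isIso₁ _ mem).1 hB0
  exact ((t.le 0).prop_iff_of_iso (asIso f)).1 hA

lemma ge₂ (T : Triangle D) (hT : T ∈ distTriang D) (h₁ : t.ge 0 T.obj₁)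
    (h₃ : t.ge 0 T.obj₃) : t.ge 0 T.obj₂ := by
  obtain ⟨A, B, hA, hB, f, g, δ, mem⟩ := t.exists_triangle T.obj₂ (-1) 0 (by omega)
  have hf : f = 0 := by
    obtain ⟨ψ, hψ⟩ := Triangle.coyoneda_exact₂ T hT f
      (zero_of t _ (-1) 0 hA h₃ (by omega))
    rw [hψ, zero_of t ψ (-1) 0 hA h₁ (by omega), zero_comp]
  have hA0 : IsZero A := by
    obtain ⟨ψ, hψ⟩ := Triangle.coyoneda_exact₂ _ (inv_rot_of_distTriang _ mem) (𝟙 A)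
      (by show 𝟙 A ≫ f = 0; rw [hf, comp_zero])
    rw [IsZero.iff_id_eq_zero, hψ,
      zero_of t ψ (-1) 1 hA (t.ge_shift 0 (-1) 1 (by omega) B hB) (by omega), zero_comp]; rfl
  have : IsIso g := (Triangle.isZero₁_iff_isIso₂ _ mem).1 hA0
  exact ((t.ge 0).prop_iff_of_iso (asIso g)).2 hB

end TAux

lemma extSeq_one_eq_base {A : Type*} [Category A] [Abelian A] {X Y : A}
    (ξ : ExtSeq A 1 X Y) : ∃ s : SES A X Y, ξ = .base s :=
  match ξ with
  | .base s => ⟨s, rfl⟩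

lemma heartProp_obj {A : Type*} [Category A] [Abelian A]
    {D : Type*} [Category D] [HasZeroObject D] [Preadditive D] [HasShift D ℤ]
    [∀ n : ℤ, (shiftFunctor D n).Additive] [Pretriangulated D]
    {t : TStructure D} (h : HeartData A D t) (X : A) :
    heartProp D t (h.ι.obj X) :=
  (h.essImage_iff _).1 (h.ι.obj_mem_essImage X)

/-- The canonical map `θ^1 : Yext^1_A(X, Y) → Hom_D(X, Σ Y)` is a bijection. -/
theorem statement_4 {A : Type*} [Category A] [Abelian A]
    {D : Type*} [Category D] [HasZeroObject D] [Preadditive D] [HasShift D ℤ]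
    [∀ n : ℤ, (shiftFunctor D n).Additive] [Pretriangulated D]
    {t : TStructure D} (h : HeartData A D t)
    (θ : ∀ (n : ℕ) (X Y : A), ExtSeq A n X Y → (h.ι.obj X ⟶ (h.ι.obj Y)⟦(n : ℤ)⟧))
    (hθ : IsCanThetaFamily h θ) (X Y : A) :
    Function.Bijective (thetaBar θ hθ 1 X Y) := by
  haveI := h.additive
  haveI := h.full
  haveI := h.faithful
  have E1 : ((h.ι.obj Y)⟦((1 : ℕ) : ℤ)⟧ : D) = (h.ι.obj Y)⟦(1 : ℤ)⟧ := by norm_num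
  let e : ((h.ι.obj Y)⟦((1 : ℕ) : ℤ)⟧ : D) ⟶ (h.ι.obj Y)⟦(1 : ℤ)⟧ := eqToHom E1
  haveI : IsIso e := inferInstanceAs (IsIso (eqToHom E1))
  constructor
  · -- injectivity
    intro a b hab
    obtain ⟨ξ, rfl⟩ := Quot.exists_rep a
    obtain ⟨ξ', rfl⟩ := Quot.exists_rep b
    obtain ⟨s, rfl⟩ := extSeq_one_eq_base ξ
    obtain ⟨s', rfl⟩ := extSeq_one_eq_base ξ'
    have hab' : θ 1 X Y (.base s) = θ 1 X Y (.base s') := hab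
    obtain ⟨bb, hb₁, hb₂⟩ : ∃ c : h.ι.obj s.E ⟶ h.ι.obj s'.E, h.ι.map s.i ≫ c = 𝟙 _ ≫ h.ι.map s'.i ∧
        h.ι.map s.p ≫ 𝟙 _ = c ≫ h.ι.map s'.p := complete_distinguished_triangle_morphism₂ _ _
      (hθ.base s) (hθ.base s') (𝟙 _) (𝟙 _)
      (by
        show (θ 1 X Y (.base s) ≫ eqToHom E1) ≫ (shiftFunctor D (1 : ℤ)).map (𝟙 (h.ι.obj Y)) =
          𝟙 (h.ι.obj X) ≫ (θ 1 X Y (.base s') ≫ eqToHom E1)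
        rw [CategoryTheory.Functor.map_id, comp_id, id_comp, hab'])
    refine Quot.sound (ExtHom.base s s' (h.ι.preimage bb) ?_ ?_)
    · apply h.ι.map_injective
      rw [Functor.map_comp, Functor.map_comp, Functor.map_preimage, CategoryTheory.Functor.map_id,
        id_comp, hb₁, id_comp]
    · apply h.ι.map_injective
      rw [Functor.map_comp, Functor.map_comp, Functor.map_preimage, CategoryTheory.Functor.map_id,
        comp_id, ← hb₂, comp_id]
  · -- surjectivity
    intro f
    obtain ⟨Z, g₁, g₂, hTZ⟩ := distinguished_cocone_triangle₂ (f ≫ e)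
    have hY := heartProp_obj h Y
    have hX := heartProp_obj h X
    have hZle : t.le 0 Z := le₂ t _ hTZ hY.1 hX.1
    have hZge : t.ge 0 Z := ge₂ t _ hTZ hY.2 hX.2
    obtain ⟨E, ⟨eIso⟩⟩ := (h.essImage_iff Z).2 ⟨hZle, hZge⟩
    set i : Y ⟶ E := h.ι.preimage (g₁ ≫ eIso.inv) with hi
    set p : E ⟶ X := h.ι.preimage (eIso.hom ≫ g₂) with hp
    have hmi : h.ι.map i = g₁ ≫ eIso.inv := h.ι.map_preimage _
    have hmp : h.ι.map p = eIso.hom ≫ g₂ := h.ι.map_preimage _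
    have hT1 : Triangle.mk (h.ι.map i) (h.ι.map p) (f ≫ e) ∈ distTriang D := by
      refine isomorphic_distinguished _ hTZ _ ?_
      refine Triangle.isoMk _ _ (Iso.refl _) eIso (Iso.refl _) ?_ ?_ ?_
      · show h.ι.map i ≫ eIso.hom = 𝟙 (h.ι.obj Y) ≫ g₁; rw [hmi]; simp
      · show h.ι.map p ≫ 𝟙 (h.ι.obj X) = eIso.hom ≫ g₂; rw [hmp]; simp
      · show (f ≫ e) ≫ (shiftFunctor D (1 : ℤ)).map (𝟙 (h.ι.obj Y)) = 𝟙 (h.ι.obj X) ≫ (f ≫ e); simp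
    have hw : i ≫ p = 0 := by
      apply h.ι.map_injective
      rw [Functor.map_comp, hmi, hmp, Functor.map_zero, assoc, Iso.inv_hom_id_assoc]
      exact comp_distTriang_mor_zero₁₂ _ hTZ
    have hmono : Mono i := by
      rw [Preadditive.mono_iff_cancel_zero]
      intro W g hg
      apply h.ι.map_injective
      rw [Functor.map_zero]
      have hg' : h.ι.map g ≫
          (Triangle.mk (h.ι.map i) (h.ι.map p) (f ≫ e)).invRotate.mor₂ = 0 := by
        show h.ι.map g ≫ h.ι.map i = 0
        rw [← Functor.map_comp, hg, Functor.map_zero]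
      obtain ⟨φ, hφ⟩ := Triangle.coyoneda_exact₂ _ (inv_rot_of_distTriang _ hT1)
        (h.ι.map g) hg'
      rw [hφ, show φ = 0 from zero_of t φ 0 1 (heartProp_obj h W).1
        (t.ge_shift 0 (-1) 1 (by omega) _ hX.2) (by omega), zero_comp]; rfl
    have hepi : Epi p := by
      rw [Preadditive.epi_iff_cancel_zero]
      intro W g hg
      apply h.ι.map_injective
      rw [Functor.map_zero]
      obtain ⟨ψ, hψ⟩ := Triangle.yoneda_exact₃ _ hT1 (h.ι.map g)
        (by show h.ι.map p ≫ h.ι.map g = 0; rw [← Functor.map_comp, hg, Functor.map_zero])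
      rw [hψ, show ψ = 0 from zero_of t ψ (-1) 0
        (t.le_shift 0 1 (-1) (by omega) _ hY.1) (heartProp_obj h W).2 (by omega),
        comp_zero]; rfl
    haveI := hmono
    haveI := hepi
    have hex : (ShortComplex.mk i p hw).Exact := by
      apply ShortComplex.exact_of_f_is_kernel
      exact KernelFork.IsLimit.ofι' i hw (fun {W} k hk => by
        have hk' : h.ι.map k ≫
            (Triangle.mk (h.ι.map i) (h.ι.map p) (f ≫ e)).mor₂ = 0 := by
          show h.ι.map k ≫ h.ι.map p = 0; rw [← Functor.map_comp, hk, Functor.map_zero]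
        refine ⟨h.ι.preimage ((Triangle.coyoneda_exact₂ _ hT1 (h.ι.map k) hk').choose), ?_⟩
        apply h.ι.map_injective
        refine (Functor.map_comp _ _ _).trans ?_
        refine (congrArg (· ≫ h.ι.map i) (h.ι.map_preimage _)).trans ?_
        exact (Triangle.coyoneda_exact₂ _ hT1 (h.ι.map k) hk').choose_spec.symm)
    let s : SES A X Y := ⟨E, i, p, hw, { exact := hex, mono_f := hmono, epi_g := hepi }⟩
    refine ⟨Yext.mk A (ExtSeq.base s), ?_⟩
    show θ 1 X Y (ExtSeq.base s) = f
    obtain ⟨c, hc₁, hc₂⟩ : ∃ c : h.ι.obj X ⟶ h.ι.obj X, h.ι.map p ≫ c = 𝟙 _ ≫ h.ι.map s.p ∧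
        (f ≫ e) ≫ (shiftFunctor D (1 : ℤ)).map (𝟙 (h.ι.obj Y)) = c ≫ (θ 1 X Y (.base s) ≫ eqToHom E1) :=
      complete_distinguished_triangle_morphism _ _ hT1 (hθ.base s)
      (𝟙 _) (𝟙 _) (by show h.ι.map i ≫ 𝟙 _ = 𝟙 _ ≫ h.ι.map i; rw [id_comp, comp_id])
    let c' : h.ι.obj X ⟶ h.ι.obj X := c
    have hc₁' : h.ι.map p ≫ c' = h.ι.map p := by simpa using hc₁
    have hc₂' : f ≫ e = c' ≫ θ 1 X Y (ExtSeq.base s) := by simpa using hc₂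
    have h0 : h.ι.map p ≫ (c' - 𝟙 (h.ι.obj X)) = 0 := by
      rw [Preadditive.comp_sub, hc₁', comp_id, sub_self]
    obtain ⟨ψ, hψ⟩ := Triangle.yoneda_exact₃ _ (hθ.base s) (c' - 𝟙 (h.ι.obj X)) h0
    rw [show ψ = 0 from zero_of t ψ (-1) 0
      (t.le_shift 0 1 (-1) (by omega) _ hY.1) hX.2 (by omega), comp_zero] at hψ
    have hcc : c' = 𝟙 (h.ι.obj X) := by exact sub_eq_zero.mp hψ
    rw [hcc, id_comp] at hc₂'
    rw [← hc₂']
    exact comp_id f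

end HRS
end

section
/- Let D be a triangulated category with a t-structure with heart A, and let n ≥ 2. Assume that the canonical maps θ^n_{A,B} : Yext^n_A(A,B) → Hom_D(A, Σ^n B) are isomorphisms for all objects A, B of A. Then for all X, Y ∈ A the canonical map θ^{n+1}_{X,Y} : Yext^{n+1}_A(X, Y) → Hom_D(X, Σ^{n+1}(Y)) is injective. -/
open CategoryTheory Category Limits Pretriangulated Triangulated ZeroObject

namespace HRS

variable (A : Type*) [Category A] [Abelian A]

variable (D : Type*) [Category D] [HasZeroObject D] [Preadditive D] [HasShift D ℤ]
  [∀ n : ℤ, (shiftFunctor D n).Additive] [Pretriangulated D]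

variable {A D}

variable (A D)

variable {A D}

section Statement5Helpers

variable {A : Type*} [Category A] [Abelian A]
  {D : Type*} [Category D] [HasZeroObject D] [Preadditive D] [HasShift D ℤ]
  [∀ n : ℤ, (shiftFunctor D n).Additive] [Pretriangulated D]
  {t : TStructure D}

/-- Vanishing of morphisms from `LE a` to `GE b` when `a < b`. -/
lemma tzero {P Q : D} (f : P ⟶ Q) (a b : ℤ) (hab : a < b)
    (hP : t.le a P) (hQ : t.ge b Q) : f = 0 := by
  have h1 : t.le 0 (P⟦a⟧) := t.le_shift a a 0 (by ring) P hP
  have h2 : t.ge 1 (Q⟦a⟧) := by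
    have := t.ge_shift b a (b - a) (by ring) Q hQ
    exact t.ge_antitone (by omega) _ this
  have : (shiftFunctor D a).map f = 0 := t.zero' _ h1 h2
  apply (shiftFunctor D a).map_injective
  rw [this, Functor.map_zero]

lemma heart_mem (h : HeartData A D t) (X : A) : heartProp D t (h.ι.obj X) :=
  (h.essImage_iff _).1 ⟨X, ⟨Iso.refl _⟩⟩

lemma zero_from_heart (h : HeartData A D t) {U X : A}
    (f : h.ι.obj U ⟶ (h.ι.obj X)⟦(-1 : ℤ)⟧) : f = 0 :=
  tzero f 0 1 (by omega) (heart_mem h U).1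
    (t.ge_shift 0 (-1) 1 (by ring) _ (heart_mem h X).2)

lemma zero_to_heart (h : HeartData A D t) {Y U : A}
    (f : (h.ι.obj Y)⟦(1 : ℤ)⟧ ⟶ h.ι.obj U) : f = 0 :=
  tzero f (-1) 0 (by omega) (t.le_shift 0 1 (-1) (by ring) _ (heart_mem h Y).1)
    (heart_mem h U).2

/-- The heart is closed under extensions. -/
lemma heart_ext₂ (h : HeartData A D t) (T : Triangle D) (hT : T ∈ distTriang D)
    (h1 : heartProp D t T.obj₁) (h3 : heartProp D t T.obj₃) : heartProp D t T.obj₂ := by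
  constructor
  · -- LE 0
    obtain ⟨P, Q, hP, hQ, f, g, d, mem⟩ := t.exists_triangle T.obj₂ 0 1 rfl
    have hg : g = 0 := by
      have h13 : T.mor₁ ≫ g = 0 := t.zero' _ h1.1 hQ
      obtain ⟨g', hg'⟩ := Triangle.yoneda_exact₂ T hT g h13
      rw [hg', t.zero' g' h3.1 hQ, comp_zero]
    have hQ0 : IsZero Q := by
      rw [IsZero.iff_id_eq_zero]
      obtain ⟨w, hw⟩ : ∃ w : P⟦(1 : ℤ)⟧ ⟶ Q, 𝟙 Q = d ≫ w :=
        Triangle.yoneda_exact₃ _ mem (𝟙 Q) (by change g ≫ 𝟙 Q = 0; rw [comp_id, hg])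
      rw [hw, tzero w (-1) 1 (by omega) (t.le_shift 0 1 (-1) (by ring) P hP) hQ, comp_zero]
    have : IsIso f := (Triangle.isZero₃_iff_isIso₁ _ mem).1 hQ0
    exact (t.le 0).prop_of_iso (asIso f) hP
  · -- GE 0
    obtain ⟨P, Q, hP, hQ, f, g, d, mem⟩ := t.exists_triangle T.obj₂ (-1) 0 (by ring)
    have hf : f = 0 := by
      have h2 : f ≫ T.mor₂ = 0 := tzero _ (-1) 0 (by omega) hP h3.2
      obtain ⟨w, hw⟩ := Triangle.coyoneda_exact₂ T hT f h2
      rw [hw, tzero w (-1) 0 (by omega) hP h1.2, zero_comp]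
    have hP0 : IsZero P := by
      rw [IsZero.iff_id_eq_zero]
      obtain ⟨w, hw⟩ := Triangle.coyoneda_exact₂ _
        (inv_rot_of_distTriang _ mem) (𝟙 P) (by change 𝟙 P ≫ f = 0; rw [hf, comp_zero])
      rw [hw, tzero w (-1) 1 (by omega) hP (t.ge_shift 0 (-1) 1 (by ring) Q hQ)]; exact zero_comp
    have : IsIso g := (Triangle.isZero₁_iff_isIso₂ _ mem).1 hP0
    exact (t.ge 0).prop_of_iso (asIso g).symm hQ

/-- The connecting map of a distinguished triangle between fixed maps of heart objects
is unique. -/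
lemma third_map_unique (h : HeartData A D t) {Y X : A} {E : D}
    {f : h.ι.obj Y ⟶ E} {g : E ⟶ h.ι.obj X}
    {d d' : h.ι.obj X ⟶ (h.ι.obj Y)⟦(1 : ℤ)⟧}
    (hd : Triangle.mk f g d ∈ distTriang D)
    (hd' : Triangle.mk f g d' ∈ distTriang D) : d = d' := by
  obtain ⟨c, hc₁, hc₂⟩ : ∃ c : h.ι.obj X ⟶ h.ι.obj X, g ≫ c = 𝟙 E ≫ g ∧
      d ≫ (shiftFunctor D (1 : ℤ)).map (𝟙 (h.ι.obj Y)) = c ≫ d' :=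
    complete_distinguished_triangle_morphism
    (Triangle.mk f g d) (Triangle.mk f g d') hd hd' (𝟙 _) (𝟙 _)
      (by exact (comp_id f).trans (id_comp f).symm)
  have hc : c = 𝟙 _ := by
    obtain ⟨w, hw⟩ : ∃ w : (h.ι.obj Y)⟦(1 : ℤ)⟧ ⟶ h.ι.obj X, c - 𝟙 _ = d ≫ w :=
      Triangle.yoneda_exact₃ _ hd (c - 𝟙 _)
      (by change g ≫ (c - 𝟙 _) = 0; rw [Preadditive.comp_sub, hc₁, id_comp, comp_id, sub_self])
    have hw0 : w = 0 := zero_to_heart h w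
    rw [← sub_eq_zero, hw, hw0, comp_zero]
  rw [hc] at hc₂
  simpa using hc₂

end Statement5Helpers
section ThetaHelpers

variable {A : Type*} [Category A] [Abelian A]
  {D : Type*} [Category D] [HasZeroObject D] [Preadditive D] [HasShift D ℤ]
  [∀ n : ℤ, (shiftFunctor D n).Additive] [Pretriangulated D]
  {t : TStructure D} {h : HeartData A D t}
  {θ : ∀ (n : ℕ) (X Y : A), ExtSeq A n X Y → (h.ι.obj X ⟶ (h.ι.obj Y)⟦(n : ℤ)⟧)}

/-- Surjectivity of `θ¹`: every morphism `X ⟶ Y⟦1⟧` between heart objects is the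
connecting morphism of a short exact sequence in the heart. -/
lemma theta_one_surjective (hθ : IsCanThetaFamily h θ) {X Y : A}
    (δ : h.ι.obj X ⟶ (h.ι.obj Y)⟦((1 : ℕ) : ℤ)⟧) :
    ∃ s : SES A X Y, θ 1 X Y (.base s) = δ := by
  haveI := h.full; haveI := h.faithful; haveI := h.additive
  have ecast : ((1 : ℕ) : ℤ) = (1 : ℤ) := by norm_num
  set eY : ((h.ι.obj Y)⟦((1 : ℕ) : ℤ)⟧ : D) ⟶ (h.ι.obj Y)⟦(1 : ℤ)⟧ :=
    eqToHom (by rw [ecast]) with heY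
  obtain ⟨V, f, g, hT⟩ := distinguished_cocone_triangle₂ (δ ≫ eY)
  have hheart : heartProp D t V :=
    heart_ext₂ h _ hT (heart_mem h Y) (heart_mem h X)
  obtain ⟨V₀, ⟨ev⟩⟩ := (h.essImage_iff V).2 hheart
  set i₀ : Y ⟶ V₀ := h.ι.preimage (f ≫ ev.inv) with hi₀
  set p₀ : V₀ ⟶ X := h.ι.preimage (ev.hom ≫ g) with hp₀
  have m1 : h.ι.map i₀ = f ≫ ev.inv := h.ι.map_preimage _
  have m2 : h.ι.map p₀ = ev.hom ≫ g := h.ι.map_preimage _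
  have hT0 : Triangle.mk (h.ι.map i₀) (h.ι.map p₀) (δ ≫ eY) ∈ distTriang D := by
    refine isomorphic_distinguished _ hT _ ?_
    exact Triangle.isoMk _ _ (Iso.refl _) ev (Iso.refl _)
      (by change h.ι.map i₀ ≫ ev.hom = 𝟙 (h.ι.obj Y) ≫ f; rw [m1]; simp)
      (by change h.ι.map p₀ ≫ 𝟙 (h.ι.obj X) = ev.hom ≫ g; rw [m2]; simp)
      (by change (δ ≫ eY) ≫ (shiftFunctor D 1).map (𝟙 (h.ι.obj Y)) = 𝟙 (h.ι.obj X) ≫ δ ≫ eY; simp)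
  have w : i₀ ≫ p₀ = 0 := by
    apply h.ι.map_injective
    rw [Functor.map_comp, Functor.map_zero]
    exact comp_distTriang_mor_zero₁₂ _ hT0
  have hmono : Mono i₀ := by
    rw [Preadditive.mono_iff_cancel_zero]
    intro U g' hg'
    obtain ⟨w', hw'⟩ := Triangle.coyoneda_exact₂ _ (inv_rot_of_distTriang _ hT0)
      (h.ι.map g') (by change h.ι.map g' ≫ h.ι.map i₀ = 0; rw [← Functor.map_comp, hg', Functor.map_zero])
    apply h.ι.map_injective
    rw [hw', zero_from_heart h w', Functor.map_zero]; exact zero_comp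
  have hepi : Epi p₀ := by
    rw [Preadditive.epi_iff_cancel_zero]
    intro U g' hg'
    obtain ⟨w', hw'⟩ := Triangle.yoneda_exact₃ _ hT0
      (h.ι.map g') (by change h.ι.map p₀ ≫ h.ι.map g' = 0; rw [← Functor.map_comp, hg', Functor.map_zero])
    apply h.ι.map_injective
    rw [hw', zero_to_heart h w', Functor.map_zero]; exact comp_zero
  have hexact : (ShortComplex.mk i₀ p₀ w).Exact := by
    rw [ShortComplex.exact_iff_epi_kernel_lift]
    obtain ⟨w', hw'⟩ : ∃ w' : h.ι.obj (kernel p₀) ⟶ h.ι.obj Y,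
        h.ι.map (kernel.ι p₀) = w' ≫ h.ι.map i₀ := Triangle.coyoneda_exact₂ _ hT0 (h.ι.map (kernel.ι p₀))
      (by change h.ι.map (kernel.ι p₀) ≫ h.ι.map p₀ = 0; rw [← Functor.map_comp, kernel.condition, Functor.map_zero])
    set l : kernel p₀ ⟶ Y := h.ι.preimage w' with hl
    have hli : l ≫ i₀ = kernel.ι p₀ := by
      apply h.ι.map_injective
      rw [Functor.map_comp, h.ι.map_preimage]
      exact hw'.symm
    have key : l ≫ kernel.lift p₀ i₀ w = 𝟙 (kernel p₀) := by
      rw [← cancel_mono (kernel.ι p₀)]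
      simp [hli]
    haveI : Epi (l ≫ kernel.lift p₀ i₀ w) := by rw [key]; infer_instance
    exact epi_of_epi l (kernel.lift p₀ i₀ w)
  refine ⟨⟨V₀, i₀, p₀, w, { exact := hexact, mono_f := hmono, epi_g := hepi }⟩, ?_⟩
  have h3 := third_map_unique h
    (hθ.base ⟨V₀, i₀, p₀, w, { exact := hexact, mono_f := hmono, epi_g := hepi }⟩) hT0
  rw [← cancel_mono eY]
  exact h3

/-- Fill-in lemma: a commuting square of connecting morphisms lifts to a morphism of the
short exact sequences. -/
lemma exthom_base_exists (hθ : IsCanThetaFamily h θ) {X X' Y Y' : A}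
    (s : SES A X Y) (s' : SES A X' Y') (a : Y ⟶ Y') (b : X ⟶ X')
    (hsq : h.ι.map b ≫ θ 1 X' Y' (.base s') =
      θ 1 X Y (.base s) ≫ (shiftFunctor D ((1 : ℕ) : ℤ)).map (h.ι.map a)) :
    ∃ e : s.E ⟶ s'.E, s.i ≫ e = a ≫ s'.i ∧ s.p ≫ b = e ≫ s'.p := by
  haveI := h.full; haveI := h.faithful; haveI := h.additive
  obtain ⟨e', he₁, he₂⟩ : ∃ e' : h.ι.obj s.E ⟶ h.ι.obj s'.E,
      h.ι.map s.i ≫ e' = h.ι.map a ≫ h.ι.map s'.i ∧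
      h.ι.map s.p ≫ h.ι.map b = e' ≫ h.ι.map s'.p := complete_distinguished_triangle_morphism₂ _ _
    (hθ.base s) (hθ.base s') (h.ι.map a) (h.ι.map b) (by
      change (θ 1 X Y (.base s) ≫ eqToHom (by norm_num)) ≫
        (shiftFunctor D (1 : ℤ)).map (h.ι.map a) =
        h.ι.map b ≫ θ 1 X' Y' (.base s') ≫ eqToHom (by norm_num)
      dsimp
      simp only [comp_id, id_comp]
      exact hsq.symm)
  refine ⟨h.ι.preimage e', ?_, ?_⟩
  · apply h.ι.map_injective
    rw [Functor.map_comp, Functor.map_comp, h.ι.map_preimage]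
    exact he₁
  · apply h.ι.map_injective
    rw [Functor.map_comp, Functor.map_comp, h.ι.map_preimage]
    exact he₂

/-- Naturality of `θ¹` with respect to morphisms of short exact sequences. -/
lemma theta_one_natural (hθ : IsCanThetaFamily h θ) {X X' Y Y' : A}
    (s : SES A X Y) (s' : SES A X' Y') (a : Y ⟶ Y') (b : X ⟶ X') (e : s.E ⟶ s'.E)
    (h1 : s.i ≫ e = a ≫ s'.i) (h2 : s.p ≫ b = e ≫ s'.p) :
    h.ι.map b ≫ θ 1 X' Y' (.base s') =
      θ 1 X Y (.base s) ≫ (shiftFunctor D ((1 : ℕ) : ℤ)).map (h.ι.map a) := by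
  haveI := h.full; haveI := h.faithful; haveI := h.additive
  obtain ⟨c, hc₁, hc₂⟩ : ∃ c : h.ι.obj X ⟶ h.ι.obj X',
      h.ι.map s.p ≫ c = h.ι.map e ≫ h.ι.map s'.p ∧
      (θ 1 X Y (.base s) ≫ eqToHom (by norm_num)) ≫ (shiftFunctor D (1 : ℤ)).map (h.ι.map a) =
        c ≫ θ 1 X' Y' (.base s') ≫ eqToHom (by norm_num) :=
    complete_distinguished_triangle_morphism _ _
    (hθ.base s) (hθ.base s') (h.ι.map a) (h.ι.map e)
    (by change h.ι.map s.i ≫ h.ι.map e = h.ι.map a ≫ h.ι.map s'.i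
        rw [← Functor.map_comp, ← Functor.map_comp, h1])
  dsimp at hc₂
  have hc : c = h.ι.map b := by
    obtain ⟨w, hw⟩ : ∃ w : (h.ι.obj Y)⟦(1 : ℤ)⟧ ⟶ h.ι.obj X',
        c - h.ι.map b = (θ 1 X Y (.base s) ≫ eqToHom (by norm_num)) ≫ w :=
      Triangle.yoneda_exact₃ _ (hθ.base s)
      ((c - h.ι.map b : h.ι.obj X ⟶ h.ι.obj X')) (by
        change h.ι.map s.p ≫ (c - h.ι.map b) = 0
        rw [Preadditive.comp_sub, hc₁, ← Functor.map_comp, ← Functor.map_comp, ← h2, sub_self])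
    rw [← sub_eq_zero, hw, zero_to_heart h w, comp_zero]
  rw [hc] at hc₂
  simpa using hc₂.symm

/-- Naturality of `θⁿ` with respect to morphisms of Yoneda extensions. -/
lemma theta_natural (hθ : IsCanThetaFamily h θ) {n : ℕ} {X X' Y Y' : A}
    {a : Y ⟶ Y'} {b : X ⟶ X'} {ξ : ExtSeq A n X Y} {ξ' : ExtSeq A n X' Y'}
    (hom : ExtHom A a b ξ ξ') :
    h.ι.map b ≫ θ n X' Y' ξ' =
      θ n X Y ξ ≫ (shiftFunctor D ((n : ℕ) : ℤ)).map (h.ι.map a) := by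
  induction hom with
  | base s s' e h1 h2 => exact theta_one_natural hθ s s' _ _ e h1 h2
  | @splice m X X' Y Y' Z Z' a b tt s s' ρ ρ' e h1 h2 hom ih =>
      have hone := theta_one_natural hθ s s' a tt e h1 h2
      have hσ : (shiftFunctor D ((m : ℕ) : ℤ)).map ((shiftFunctor D ((1 : ℕ) : ℤ)).map
            (h.ι.map a)) ≫ (shiftFunctorAdd' D ((1 : ℕ) : ℤ) ((m : ℕ) : ℤ)
            (((m + 1 : ℕ)) : ℤ) (by push_cast; ring)).inv.app (h.ι.obj Y') =
          (shiftFunctorAdd' D ((1 : ℕ) : ℤ) ((m : ℕ) : ℤ) (((m + 1 : ℕ)) : ℤ)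
            (by push_cast; ring)).inv.app (h.ι.obj Y) ≫
          (shiftFunctor D (((m + 1 : ℕ)) : ℤ)).map (h.ι.map a) :=
        (shiftFunctorAdd' D ((1 : ℕ) : ℤ) ((m : ℕ) : ℤ) (((m + 1 : ℕ)) : ℤ)
          (by push_cast; ring)).inv.naturality (h.ι.map a)
      calc h.ι.map b ≫ θ (m + 1) X' Y' (.splice s' ρ')
          = (h.ι.map b ≫ θ m X' Z' ρ') ≫
              ((shiftFunctor D ((m : ℕ) : ℤ)).map (θ 1 Z' Y' (.base s')) ≫
              (shiftFunctorAdd' D ((1 : ℕ) : ℤ) ((m : ℕ) : ℤ) (((m + 1 : ℕ)) : ℤ)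
                (by push_cast; ring)).inv.app (h.ι.obj Y')) := by
            rw [hθ.splice]; simp only [assoc]
        _ = (θ m X Z ρ ≫ (shiftFunctor D ((m : ℕ) : ℤ)).map (h.ι.map tt)) ≫
              ((shiftFunctor D ((m : ℕ) : ℤ)).map (θ 1 Z' Y' (.base s')) ≫
              (shiftFunctorAdd' D ((1 : ℕ) : ℤ) ((m : ℕ) : ℤ) (((m + 1 : ℕ)) : ℤ)
                (by push_cast; ring)).inv.app (h.ι.obj Y')) := by rw [ih]
        _ = θ m X Z ρ ≫ (shiftFunctor D ((m : ℕ) : ℤ)).map (h.ι.map tt ≫ θ 1 Z' Y' (.base s')) ≫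
              (shiftFunctorAdd' D ((1 : ℕ) : ℤ) ((m : ℕ) : ℤ) (((m + 1 : ℕ)) : ℤ)
                (by push_cast; ring)).inv.app (h.ι.obj Y') := by
            simp only [Functor.map_comp, assoc]
        _ = θ m X Z ρ ≫ (shiftFunctor D ((m : ℕ) : ℤ)).map (θ 1 Z Y (.base s) ≫
              (shiftFunctor D ((1 : ℕ) : ℤ)).map (h.ι.map a)) ≫
              (shiftFunctorAdd' D ((1 : ℕ) : ℤ) ((m : ℕ) : ℤ) (((m + 1 : ℕ)) : ℤ)
                (by push_cast; ring)).inv.app (h.ι.obj Y') := by rw [hone]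
        _ = θ m X Z ρ ≫ (shiftFunctor D ((m : ℕ) : ℤ)).map (θ 1 Z Y (.base s)) ≫
              ((shiftFunctor D ((m : ℕ) : ℤ)).map ((shiftFunctor D ((1 : ℕ) : ℤ)).map
                (h.ι.map a)) ≫
              (shiftFunctorAdd' D ((1 : ℕ) : ℤ) ((m : ℕ) : ℤ) (((m + 1 : ℕ)) : ℤ)
                (by push_cast; ring)).inv.app (h.ι.obj Y')) := by
            simp only [Functor.map_comp, assoc]
        _ = θ m X Z ρ ≫ (shiftFunctor D ((m : ℕ) : ℤ)).map (θ 1 Z Y (.base s)) ≫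
              (shiftFunctorAdd' D ((1 : ℕ) : ℤ) ((m : ℕ) : ℤ) (((m + 1 : ℕ)) : ℤ)
                (by push_cast; ring)).inv.app (h.ι.obj Y) ≫
              (shiftFunctor D (((m + 1 : ℕ)) : ℤ)).map (h.ι.map a) := by rw [hσ]
        _ = θ (m + 1) X Y (.splice s ρ) ≫
              (shiftFunctor D (((m + 1 : ℕ)) : ℤ)).map (h.ι.map a) := by
            rw [hθ.splice]; simp only [assoc]

lemma extHom_refl : ∀ {n : ℕ} {X Y : A} (ξ : ExtSeq A n X Y), ExtHom A (𝟙 Y) (𝟙 X) ξ ξ := by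
  intro n X Y ξ
  induction ξ with
  | base s => exact .base s s (𝟙 _) (by simp) (by simp)
  | splice s ρ ih => exact .splice (𝟙 _) s s ρ ρ (𝟙 _) (by simp) (by simp) ih

/-- Pushforward of a Yoneda extension along a morphism on its last (sub-object) end. -/
lemma pushforward_exists (hθ : IsCanThetaFamily h θ) {n : ℕ} {X Z Z₂ : A}
    (ξ : ExtSeq A n X Z) (u : Z ⟶ Z₂) :
    ∃ ξ₂ : ExtSeq A n X Z₂, ExtHom A u (𝟙 X) ξ ξ₂ := by
  cases ξ with
  | base s =>
      obtain ⟨s₂, hs₂⟩ := theta_one_surjective hθ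
        (θ 1 _ _ (.base s) ≫ (shiftFunctor D ((1 : ℕ) : ℤ)).map (h.ι.map u))
      obtain ⟨e, he1, he2⟩ := exthom_base_exists hθ s s₂ u (𝟙 X)
        (by rw [hs₂]; simp)
      exact ⟨.base s₂, .base s s₂ e he1 he2⟩
  | splice s ρ =>
      obtain ⟨s₂, hs₂⟩ := theta_one_surjective hθ
        (θ 1 _ _ (.base s) ≫ (shiftFunctor D ((1 : ℕ) : ℤ)).map (h.ι.map u))
      obtain ⟨e, he1, he2⟩ := exthom_base_exists hθ s s₂ u (𝟙 _)
        (by rw [hs₂]; simp)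
      exact ⟨.splice s₂ ρ, .splice (𝟙 _) s s₂ ρ ρ e he1 he2 (extHom_refl ρ)⟩

/-- Splicing with a fixed short exact sequence descends to Yoneda extension classes. -/
lemma splice_quot_congr {n : ℕ} {X Z Y : A} (s : SES A Z Y) {ζ₁ ζ₂ : ExtSeq A n X Z}
    (hq : Yext.mk A ζ₁ = Yext.mk A ζ₂) :
    Yext.mk A (ExtSeq.splice s ζ₁) = Yext.mk A (ExtSeq.splice s ζ₂) := by
  have hgen := Quot.eqvGen_exact hq
  clear hq
  apply Quot.eqvGen_sound
  induction hgen with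
  | rel a b hab =>
      exact Relation.EqvGen.rel _ _ (.splice (𝟙 Z) s s a b (𝟙 s.E) (by simp) (by simp) hab)
  | refl a => exact Relation.EqvGen.refl _
  | symm a b _ ih => exact Relation.EqvGen.symm _ _ ih
  | trans a b c _ _ ih1 ih2 => exact Relation.EqvGen.trans _ _ _ ih1 ih2

end ThetaHelpers
/-- If the canonical maps `θ^n` are bijective for all objects of the heart,
then the canonical maps `θ^{n+1}` are injective. -/
theorem statement_5 {A : Type*} [Category A] [Abelian A]
    {D : Type*} [Category D] [HasZeroObject D] [Preadditive D] [HasShift D ℤ]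
    [∀ n : ℤ, (shiftFunctor D n).Additive] [Pretriangulated D]
    {t : TStructure D} (h : HeartData A D t)
    (θ : ∀ (n : ℕ) (X Y : A), ExtSeq A n X Y → (h.ι.obj X ⟶ (h.ι.obj Y)⟦(n : ℤ)⟧))
    (hθ : IsCanThetaFamily h θ) (n : ℕ) (hn : 2 ≤ n)
    (hyp : ∀ X Y : A, Function.Bijective (thetaBar θ hθ n X Y)) (X Y : A) :
    Function.Injective (thetaBar θ hθ (n + 1) X Y) := by
  haveI := h.full; haveI := h.faithful; haveI := h.additive
  intro x y hxy
  obtain ⟨ξ, rfl⟩ := Quot.exists_rep x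
  obtain ⟨ξ', rfl⟩ := Quot.exists_rep y
  have hxy' : θ (n + 1) X Y ξ = θ (n + 1) X Y ξ' := hxy
  clear hxy
  cases ξ with
  | base s => omega
  | @splice _ _ _ Z s ζ =>
  cases ξ' with
  | base s'' => omega
  | @splice _ _ _ Z' s' ζ' =>
  rw [hθ.splice, hθ.splice] at hxy'
  -- cancel the shift-additivity isomorphism
  have key : θ n X Z ζ ≫ (shiftFunctor D ((n : ℕ) : ℤ)).map (θ 1 Z Y (.base s)) =
      θ n X Z' ζ' ≫ (shiftFunctor D ((n : ℕ) : ℤ)).map (θ 1 Z' Y (.base s')) := by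
    have h0 := congrArg
      (· ≫ (shiftFunctorAdd' D ((1 : ℕ) : ℤ) ((n : ℕ) : ℤ) (((n + 1 : ℕ)) : ℤ)
        (by push_cast; ring)).hom.app (h.ι.obj Y)) hxy'
    simpa using h0
  -- the Baer-style combination of the two short exact sequences
  obtain ⟨s₀, hs₀⟩ := theta_one_surjective hθ
    (h.ι.map biprod.fst ≫ θ 1 Z Y (.base s) - h.ι.map biprod.snd ≫ θ 1 Z' Y (.base s')
      : h.ι.obj (Z ⊞ Z') ⟶ (h.ι.obj Y)⟦((1 : ℕ) : ℤ)⟧)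
  have hinl : h.ι.map (biprod.inl : Z ⟶ Z ⊞ Z') ≫
      (h.ι.map biprod.fst ≫ θ 1 Z Y (.base s) - h.ι.map biprod.snd ≫ θ 1 Z' Y (.base s')) =
      θ 1 Z Y (.base s) := by
    rw [Preadditive.comp_sub, ← Functor.map_comp_assoc, ← Functor.map_comp_assoc]
    simp
  have hinr : h.ι.map (-biprod.inr : Z' ⟶ Z ⊞ Z') ≫
      (h.ι.map biprod.fst ≫ θ 1 Z Y (.base s) - h.ι.map biprod.snd ≫ θ 1 Z' Y (.base s')) =
      θ 1 Z' Y (.base s') := by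
    rw [Preadditive.comp_sub, ← Functor.map_comp_assoc, ← Functor.map_comp_assoc]
    simp
  -- step 1 : replace both classes by splices along `s₀`
  obtain ⟨μ, hμ⟩ := pushforward_exists hθ ζ (biprod.inl : Z ⟶ Z ⊞ Z')
  obtain ⟨μ', hμ'⟩ := pushforward_exists hθ ζ' (-biprod.inr : Z' ⟶ Z ⊞ Z')
  obtain ⟨e₁, he₁i, he₁p⟩ := exthom_base_exists hθ s s₀ (𝟙 Y) biprod.inl
    (by rw [hs₀, hinl]; simp)
  obtain ⟨e₁', he₁i', he₁p'⟩ := exthom_base_exists hθ s' s₀ (𝟙 Y) (-biprod.inr)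
    (by rw [hs₀, hinr]; simp)
  have eq1 : Yext.mk A (ExtSeq.splice s ζ) = Yext.mk A (ExtSeq.splice s₀ μ) :=
    Quot.sound (ExtHom.splice biprod.inl s s₀ ζ μ e₁ he₁i he₁p hμ)
  have eq1' : Yext.mk A (ExtSeq.splice s' ζ') = Yext.mk A (ExtSeq.splice s₀ μ') :=
    Quot.sound (ExtHom.splice (-biprod.inr) s' s₀ ζ' μ' e₁' he₁i' he₁p' hμ')
  have hμθ : θ n X (Z ⊞ Z') μ =
      θ n X Z ζ ≫ (shiftFunctor D ((n : ℕ) : ℤ)).map (h.ι.map biprod.inl) := by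
    simpa using theta_natural hθ hμ
  have hμ'θ : θ n X (Z ⊞ Z') μ' =
      θ n X Z' ζ' ≫ (shiftFunctor D ((n : ℕ) : ℤ)).map (h.ι.map (-biprod.inr)) := by
    simpa using theta_natural hθ hμ'
  -- the difference of the two lifted classes is killed by the connecting map of `s₀`
  have hφ : (θ n X (Z ⊞ Z') μ - θ n X (Z ⊞ Z') μ') ≫
      (shiftFunctor D ((n : ℕ) : ℤ)).map (θ 1 (Z ⊞ Z') Y (.base s₀)) = 0 := by
    rw [Preadditive.sub_comp, hμθ, hμ'θ, hs₀, assoc, assoc, ← Functor.map_comp,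
      ← Functor.map_comp, hinl, hinr, key, sub_self]
  -- factor the difference through the middle term of `s₀`
  have hTs : Triangle.mk (((n : ℕ) : ℤ).negOnePow • (h.ι.map s₀.i)⟦((n : ℕ) : ℤ)⟧')
      (((n : ℕ) : ℤ).negOnePow • (h.ι.map s₀.p)⟦((n : ℕ) : ℤ)⟧')
      (((n : ℕ) : ℤ).negOnePow •
        (θ 1 (Z ⊞ Z') Y (.base s₀) ≫ eqToHom (by norm_num))⟦((n : ℕ) : ℤ)⟧' ≫
        (shiftFunctorComm D 1 ((n : ℕ) : ℤ)).hom.app (h.ι.obj Y)) ∈ distTriang D :=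
    Triangle.shift_distinguished _ (hθ.base s₀) ((n : ℕ) : ℤ)
  obtain ⟨w1, hw1⟩ : ∃ w1 : h.ι.obj X ⟶ (h.ι.obj s₀.E)⟦((n : ℕ) : ℤ)⟧,
      θ n X (Z ⊞ Z') μ - θ n X (Z ⊞ Z') μ' =
        w1 ≫ (((n : ℕ) : ℤ).negOnePow • (h.ι.map s₀.p)⟦((n : ℕ) : ℤ)⟧') :=
    Triangle.coyoneda_exact₃ _ hTs
    (θ n X (Z ⊞ Z') μ - θ n X (Z ⊞ Z') μ') (by
      change (θ n X (Z ⊞ Z') μ - θ n X (Z ⊞ Z') μ') ≫ (((n : ℕ) : ℤ).negOnePow •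
          (θ 1 (Z ⊞ Z') Y (.base s₀) ≫ eqToHom (by norm_num))⟦((n : ℕ) : ℤ)⟧' ≫
          (shiftFunctorComm D 1 ((n : ℕ) : ℤ)).hom.app (h.ι.obj Y)) = 0
      rw [Linear.comp_units_smul, Functor.map_comp]
      simp only [assoc]
      rw [reassoc_of% hφ, zero_comp, smul_zero])
  have hw : θ n X (Z ⊞ Z') μ - θ n X (Z ⊞ Z') μ' =
      (((n : ℕ) : ℤ).negOnePow • w1) ≫ (h.ι.map s₀.p)⟦((n : ℕ) : ℤ)⟧' := by
    rw [Linear.units_smul_comp, ← Linear.comp_units_smul]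
    exact hw1
  obtain ⟨q, hq⟩ := (hyp X s₀.E).2 (((n : ℕ) : ℤ).negOnePow • w1)
  obtain ⟨ν, rfl⟩ := Quot.exists_rep q
  have hν : θ n X s₀.E ν = ((n : ℕ) : ℤ).negOnePow • w1 := hq
  -- a common dominating extension
  obtain ⟨q2, hq2⟩ := (hyp X ((Z ⊞ Z') ⊞ s₀.E)).2
    (θ n X (Z ⊞ Z') μ' ≫ (shiftFunctor D ((n : ℕ) : ℤ)).map (h.ι.map biprod.inl) +
     θ n X s₀.E ν ≫ (shiftFunctor D ((n : ℕ) : ℤ)).map (h.ι.map biprod.inr))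
  obtain ⟨κ, rfl⟩ := Quot.exists_rep q2
  have hκ : θ n X ((Z ⊞ Z') ⊞ s₀.E) κ =
      θ n X (Z ⊞ Z') μ' ≫ (shiftFunctor D ((n : ℕ) : ℤ)).map (h.ι.map biprod.inl) +
      θ n X s₀.E ν ≫ (shiftFunctor D ((n : ℕ) : ℤ)).map (h.ι.map biprod.inr) := hq2
  obtain ⟨κr, hκrHom⟩ := pushforward_exists hθ κ (biprod.desc (𝟙 (Z ⊞ Z')) s₀.p)
  obtain ⟨κf, hκfHom⟩ := pushforward_exists hθ κ (biprod.fst : (Z ⊞ Z') ⊞ s₀.E ⟶ Z ⊞ Z')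
  have hκrθ : θ n X (Z ⊞ Z') κr = θ n X (Z ⊞ Z') μ := by
    have hnat := theta_natural hθ hκrHom
    simp only [Functor.map_id, CategoryTheory.Functor.map_id, id_comp] at hnat
    rw [hnat, hκ, Preadditive.add_comp, assoc, assoc, ← Functor.map_comp, ← Functor.map_comp,
      ← Functor.map_comp, ← Functor.map_comp, biprod.inl_desc, biprod.inr_desc]
    simp only [CategoryTheory.Functor.map_id, comp_id]
    rw [hν, ← hw]
    abel
  have hκfθ : θ n X (Z ⊞ Z') κf = θ n X (Z ⊞ Z') μ' := by
    have hnat := theta_natural hθ hκfHom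
    simp only [Functor.map_id, CategoryTheory.Functor.map_id, id_comp] at hnat
    rw [hnat, hκ, Preadditive.add_comp, assoc, assoc, ← Functor.map_comp, ← Functor.map_comp,
      ← Functor.map_comp, ← Functor.map_comp, biprod.inl_fst, biprod.inr_fst]
    simp only [CategoryTheory.Functor.map_id, comp_id, Functor.map_zero, comp_zero, add_zero]
  have eq2 : Yext.mk A μ = Yext.mk A κr :=
    (hyp X (Z ⊞ Z')).1 (a₁ := Yext.mk A μ) (a₂ := Yext.mk A κr) (hκrθ.symm)
  have eq2' : Yext.mk A μ' = Yext.mk A κf :=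
    (hyp X (Z ⊞ Z')).1 (a₁ := Yext.mk A μ') (a₂ := Yext.mk A κf) (hκfθ.symm)
  have eq3 : Yext.mk A (ExtSeq.splice s₀ μ) = Yext.mk A (ExtSeq.splice s₀ κr) :=
    splice_quot_congr s₀ eq2
  have eq3' : Yext.mk A (ExtSeq.splice s₀ μ') = Yext.mk A (ExtSeq.splice s₀ κf) :=
    splice_quot_congr s₀ eq2'
  -- the two splices along `s₀` are both equivalent to a splice along `s₁`
  obtain ⟨s₁, hs₁⟩ := theta_one_surjective hθ
    (h.ι.map (biprod.desc (𝟙 (Z ⊞ Z')) s₀.p) ≫ θ 1 (Z ⊞ Z') Y (.base s₀))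
  obtain ⟨e₂, he₂i, he₂p⟩ := exthom_base_exists hθ s₁ s₀ (𝟙 Y)
    (biprod.desc (𝟙 (Z ⊞ Z')) s₀.p) (by rw [hs₁]; simp)
  have eq4 : Yext.mk A (ExtSeq.splice s₁ κ) = Yext.mk A (ExtSeq.splice s₀ κr) :=
    Quot.sound (ExtHom.splice (biprod.desc (𝟙 (Z ⊞ Z')) s₀.p) s₁ s₀ κ κr e₂ he₂i he₂p hκrHom)
  have hps : h.ι.map s₀.p ≫ θ 1 (Z ⊞ Z') Y (.base s₀) = 0 := by
    have h23 := comp_distTriang_mor_zero₂₃ _ (hθ.base s₀)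
    dsimp at h23
    simp at h23; exact h23
  have hdecomp : (biprod.desc (𝟙 (Z ⊞ Z')) s₀.p - biprod.fst :
      (Z ⊞ Z') ⊞ s₀.E ⟶ Z ⊞ Z') = biprod.snd ≫ s₀.p := by
    apply biprod.hom_ext' <;> simp
  have hfst0 : h.ι.map (biprod.fst : (Z ⊞ Z') ⊞ s₀.E ⟶ Z ⊞ Z') ≫
      θ 1 (Z ⊞ Z') Y (.base s₀) =
      h.ι.map (biprod.desc (𝟙 (Z ⊞ Z')) s₀.p) ≫ θ 1 (Z ⊞ Z') Y (.base s₀) := by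
    have hz : h.ι.map (biprod.desc (𝟙 (Z ⊞ Z')) s₀.p) ≫ θ 1 (Z ⊞ Z') Y (.base s₀) -
        h.ι.map (biprod.fst : (Z ⊞ Z') ⊞ s₀.E ⟶ Z ⊞ Z') ≫ θ 1 (Z ⊞ Z') Y (.base s₀) = 0 := by
      rw [← Preadditive.sub_comp, ← Functor.map_sub, hdecomp, Functor.map_comp, assoc, hps,
        comp_zero]
    exact (sub_eq_zero.mp hz).symm
  obtain ⟨e₃, he₃i, he₃p⟩ := exthom_base_exists hθ s₁ s₀ (𝟙 Y)
    (biprod.fst : (Z ⊞ Z') ⊞ s₀.E ⟶ Z ⊞ Z') (by rw [hfst0, hs₁]; simp)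
  have eq4' : Yext.mk A (ExtSeq.splice s₁ κ) = Yext.mk A (ExtSeq.splice s₀ κf) :=
    Quot.sound (ExtHom.splice (biprod.fst : (Z ⊞ Z') ⊞ s₀.E ⟶ Z ⊞ Z')
      s₁ s₀ κ κf e₃ he₃i he₃p hκfHom)
  exact eq1.trans (eq3.trans ((eq4.symm.trans eq4').trans (eq3'.symm.trans eq1'.symm)))


end HRS
end

section
/- Let (F, ω) : D → D' be a t-exact triangle functor between triangulated categories with bounded t-structures with hearts A and A'. Then for all X, Y ∈ A and n ≥ 1, the canonical maps are compatible with F: θ'^n(F|_A(ξ)) = ω^n_Y ∘ F(θ^n(ξ)) for every Yoneda extension class [ξ] ∈ Yext^n_A(X, Y), where ω^n : FΣ^n → Σ'^n F is induced by ω. -/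
open CategoryTheory Category Limits Pretriangulated Triangulated ZeroObject

namespace HRS

variable (A : Type*) [Category A] [Abelian A]

variable (D : Type*) [Category D] [HasZeroObject D] [Preadditive D] [HasShift D ℤ]
  [∀ n : ℤ, (shiftFunctor D n).Additive] [Pretriangulated D]

variable {A D}

variable (A D)

variable {A D}

section Aux

variable {D' : Type*} [Category D'] [HasZeroObject D'] [Preadditive D'] [HasShift D' ℤ]
  [∀ n : ℤ, (shiftFunctor D' n).Additive] [Pretriangulated D']

lemma heart_hom_shift_zero (t' : TStructure D') {Y X : D'}
    (hY : heartProp D' t' Y) (hX : heartProp D' t' X) (f : Y⟦(1:ℤ)⟧ ⟶ X) : f = 0 := by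
  have h2 : t'.le 0 ((Y⟦(1:ℤ)⟧)⟦(-1:ℤ)⟧) :=
    t'.le_shift (-1) (-1) 0 (by ring) _ (t'.le_shift 0 1 (-1) (by ring) Y hY.1)
  have h3 : t'.ge 1 (X⟦(-1:ℤ)⟧) := t'.ge_shift 0 (-1) 1 (by ring) X hX.2
  have h := t'.zero' ((shiftFunctor D' (-1:ℤ)).map f) h2 h3
  apply (shiftFunctor D' (-1:ℤ)).map_injective
  rw [h, Functor.map_zero]

lemma delta_unique (t' : TStructure D') {Y E X : D'}
    (hY : heartProp D' t' Y) (hX : heartProp D' t' X)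
    {f : Y ⟶ E} {g : E ⟶ X} {δ δ' : X ⟶ Y⟦(1:ℤ)⟧}
    (h1 : Triangle.mk f g δ ∈ distTriang D') (h2 : Triangle.mk f g δ' ∈ distTriang D') :
    δ = δ' := by
  obtain ⟨c, hc1, hc2⟩ : ∃ c : X ⟶ X, g ≫ c = 𝟙 E ≫ g ∧
      δ ≫ (shiftFunctor D' (1:ℤ)).map (𝟙 Y) = c ≫ δ' :=
    complete_distinguished_triangle_morphism _ _ h1 h2 (𝟙 Y) (𝟙 E)
    (by exact (comp_id f).trans (id_comp f).symm)
  have hc1' : g ≫ (show X ⟶ X from c) = g := by simpa using hc1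
  have hc2' : δ = (show X ⟶ X from c) ≫ δ' := by simpa using hc2
  obtain ⟨w, hw⟩ := Triangle.yoneda_exact₃ _ h1 ((show X ⟶ X from c) - 𝟙 X)
    (by exact (Preadditive.comp_sub g c (𝟙 X)).trans (by dsimp at hc1' ⊢; rw [hc1', comp_id, sub_self]; rfl))
  have hw' : (show X ⟶ X from c) - 𝟙 X = δ ≫ w := hw
  rw [heart_hom_shift_zero t' hY hX w, comp_zero, sub_eq_zero] at hw'
  rw [hc2', hw', id_comp]

lemma heartProp_ι {A' : Type*} [Category A'] [Abelian A'] {t' : TStructure D'}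
    (hA' : HeartData A' D' t') (W : A') : heartProp D' t' (hA'.ι.obj W) :=
  (hA'.essImage_iff _).1 (hA'.ι.obj_mem_essImage W)

end Aux

lemma theta_base_compat {A A' : Type*} [Category A] [Abelian A] [Category A'] [Abelian A']
    {D : Type*} [Category D] [HasZeroObject D] [Preadditive D] [HasShift D ℤ]
    [∀ n : ℤ, (shiftFunctor D n).Additive] [Pretriangulated D]
    {D' : Type*} [Category D'] [HasZeroObject D'] [Preadditive D'] [HasShift D' ℤ]
    [∀ n : ℤ, (shiftFunctor D' n).Additive] [Pretriangulated D']
    {t : TStructure D} {t' : TStructure D'}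
    (hA : HeartData A D t) (hA' : HeartData A' D' t')
    (F : D ⥤ D') [F.CommShift ℤ] [F.IsTriangulated]
    (F₀ : A ⥤ A') [F₀.Additive] (e : hA.ι ⋙ F ≅ F₀ ⋙ hA'.ι)
    (θ : ∀ (n : ℕ) (X Y : A), ExtSeq A n X Y → (hA.ι.obj X ⟶ (hA.ι.obj Y)⟦(n : ℤ)⟧))
    (hθ : IsCanThetaFamily hA θ)
    (θ' : ∀ (n : ℕ) (X Y : A'), ExtSeq A' n X Y → (hA'.ι.obj X ⟶ (hA'.ι.obj Y)⟦(n : ℤ)⟧))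
    (hθ' : IsCanThetaFamily hA' θ')
    (hF₀ex : ∀ S : ShortComplex A, S.ShortExact → (S.map F₀).ShortExact)
    {X Y : A} (s : SES A X Y) :
    θ' 1 (F₀.obj X) (F₀.obj Y) (.base (mapSES A' F₀ hF₀ex s)) =
      e.inv.app X ≫ F.map (θ 1 X Y (.base s)) ≫
        (F.commShiftIso ((1:ℕ) : ℤ)).hom.app (hA.ι.obj Y) ≫
          (e.hom.app Y)⟦((1:ℕ) : ℤ)⟧' := by
  have h2 := hθ'.base (mapSES A' F₀ hF₀ex s)
  have h1 := hθ.base s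
  have hF := F.map_distinguished _ h1
  set δ₂ : hA'.ι.obj (F₀.obj X) ⟶ (hA'.ι.obj (F₀.obj Y))⟦(1:ℤ)⟧ :=
    e.inv.app X ≫ (F.map (θ 1 X Y (.base s) ≫ eqToHom (by norm_num)) ≫
      (F.commShiftIso (1:ℤ)).hom.app (hA.ι.obj Y)) ≫ (e.hom.app Y)⟦(1:ℤ)⟧' with hδ₂
  have h2' : Triangle.mk (hA'.ι.map (mapSES A' F₀ hF₀ex s).i)
      (hA'.ι.map (mapSES A' F₀ hF₀ex s).p) δ₂ ∈ distTriang D' := by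
    refine isomorphic_distinguished _ hF _ ?_
    refine Triangle.isoMk _ _ (e.symm.app Y) (e.symm.app s.E) (e.symm.app X) ?_ ?_ ?_
    · exact e.inv.naturality s.i
    · exact e.inv.naturality s.p
    · have h3 : δ₂ ≫ (e.inv.app Y)⟦(1:ℤ)⟧' = e.inv.app X ≫ (F.map (θ 1 X Y (.base s) ≫
          eqToHom (by norm_num)) ≫ (F.commShiftIso (1:ℤ)).hom.app (hA.ι.obj Y)) := by
        rw [hδ₂]
        simp only [Category.assoc, ← Functor.map_comp, Iso.hom_inv_id_app]
        simp
      exact h3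
  have key := delta_unique t' (heartProp_ι hA' (F₀.obj Y)) (heartProp_ι hA' (F₀.obj X)) h2 h2'
  rw [hδ₂] at key
  simp only [Nat.cast_one, eqToHom_refl, Category.comp_id, Category.id_comp,
    Category.assoc] at key ⊢
  exact key

/-- Compatibility of the canonical maps with a t-exact triangle functor:
`θ'^n(F|_A(ξ)) = ω^n_Y ∘ F(θ^n(ξ))` (up to the identification of `F|_A` with `F` on
the hearts). -/
theorem statement_9 {A A' : Type*} [Category A] [Abelian A] [Category A'] [Abelian A']
    {D : Type*} [Category D] [HasZeroObject D] [Preadditive D] [HasShift D ℤ]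
    [∀ n : ℤ, (shiftFunctor D n).Additive] [Pretriangulated D]
    {D' : Type*} [Category D'] [HasZeroObject D'] [Preadditive D'] [HasShift D' ℤ]
    [∀ n : ℤ, (shiftFunctor D' n).Additive] [Pretriangulated D']
    (t : TStructure D) (t' : TStructure D')
    (hb : IsBoundedTStructure D t) (hb' : IsBoundedTStructure D' t')
    (hA : HeartData A D t) (hA' : HeartData A' D' t')
    (F : D ⥤ D') [F.CommShift ℤ] [F.IsTriangulated]
    (F₀ : A ⥤ A') [F₀.Additive] (e : hA.ι ⋙ F ≅ F₀ ⋙ hA'.ι)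
    (θ : ∀ (n : ℕ) (X Y : A), ExtSeq A n X Y → (hA.ι.obj X ⟶ (hA.ι.obj Y)⟦(n : ℤ)⟧))
    (hθ : IsCanThetaFamily hA θ)
    (θ' : ∀ (n : ℕ) (X Y : A'), ExtSeq A' n X Y → (hA'.ι.obj X ⟶ (hA'.ι.obj Y)⟦(n : ℤ)⟧))
    (hθ' : IsCanThetaFamily hA' θ')
    (hF₀ex : ∀ S : ShortComplex A, S.ShortExact → (S.map F₀).ShortExact) :
    ∀ (n : ℕ), 1 ≤ n → ∀ (X Y : A) (ξ : ExtSeq A n X Y),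
      θ' n (F₀.obj X) (F₀.obj Y) (mapExtSeq A' F₀ hF₀ex ξ) =
        e.inv.app X ≫ F.map (θ n X Y ξ) ≫ (F.commShiftIso (n : ℤ)).hom.app (hA.ι.obj Y) ≫
          (e.hom.app Y)⟦(n : ℤ)⟧' := by
  intro n hn X Y ξ
  clear hn
  induction ξ with
  | base s => exact theta_base_compat hA hA' F F₀ e θ hθ θ' hθ' hF₀ex s
  | @splice n X Y Z s ξ ih =>
    have hmap : mapExtSeq A' F₀ hF₀ex (ExtSeq.splice s ξ) =
        .splice (mapSES A' F₀ hF₀ex s) (mapExtSeq A' F₀ hF₀ex ξ) := rfl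
    rw [hmap, hθ'.splice, hθ.splice, ih,
      theta_base_compat hA hA' F F₀ e θ hθ θ' hθ' hF₀ex s]
    have hadd : ((1:ℕ):ℤ) + (n:ℤ) = ((n+1:ℕ):ℤ) := by push_cast; ring
    rw [F.commShiftIso_add' hadd]
    simp only [Functor.CommShift.isoAdd'_hom_app, Functor.map_comp, Category.assoc]
    slice_lhs 4 5 => rw [← Functor.map_comp, Iso.hom_inv_id_app]
    slice_rhs 4 5 => rw [← Functor.map_comp, Iso.inv_hom_id_app]
    simp only [Functor.comp_obj, Functor.map_id, Category.id_comp, Category.assoc]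
    rw [CategoryTheory.Functor.map_id, CategoryTheory.Functor.map_id]
    simp only [Category.id_comp]
    rw [← Functor.commShiftIso_hom_naturality_assoc]
    have hnat := (shiftFunctorAdd' D' ((1:ℕ):ℤ) ((n:ℕ):ℤ) (((n+1:ℕ)):ℤ) hadd).inv.naturality
      (e.hom.app Y)
    simp only [Functor.comp_map, Functor.comp_obj] at hnat
    rw [hnat]

end HRS
end

section
/- Let D be a triangulated category with a bounded t-structure with heart A, and F : D^b(A) → D a realization functor. Then for all X, Y ∈ A, F induces an isomorphism Ext^1_A(X, Y) → Hom_D(X, Σ(Y)) and an injection Ext^2_A(X, Y) → Hom_D(X, Σ^2(Y)). -/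
open CategoryTheory Category Limits Pretriangulated Triangulated ZeroObject

namespace HRS

variable (A : Type*) [Category A] [Abelian A]

variable (D : Type*) [Category D] [HasZeroObject D] [Preadditive D] [HasShift D ℤ]
  [∀ n : ℤ, (shiftFunctor D n).Additive] [Pretriangulated D]

variable {A D}

variable (A D)

variable {A D}

section Statement12Aux

variable {A : Type*} [Category A] [Abelian A]
variable {D : Type*} [Category D] [HasZeroObject D] [Preadditive D] [HasShift D ℤ]
  [∀ n : ℤ, (shiftFunctor D n).Additive] [Pretriangulated D]

lemma tzero_s12 (t : TStructure D) {X Y : D} (f : X ⟶ Y) (a b : ℤ) (hab : a < b)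
    (hX : t.le a X) (hY : t.ge b Y) : f = 0 := by
  have h1 : t.le 0 (X⟦a⟧) := t.le_shift a a 0 (by omega) X hX
  have h2 : t.ge 1 (Y⟦a⟧) :=
    t.ge_antitone (show (1:ℤ) ≤ b - a by omega) _ (t.ge_shift b a (b - a) (by omega) Y hY)
  have h3 : (shiftFunctor D a).map f = 0 := t.zero' _ h1 h2
  apply (shiftFunctor D a).map_injective
  rw [h3, Functor.map_zero]

lemma le_two_of_ext (t : TStructure D) (T : Triangle D) (hT : T ∈ distTriang D)
    (h1 : t.le 0 T.obj₁) (h3 : t.le 0 T.obj₃) : t.le 0 T.obj₂ := by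
  obtain ⟨X', Y', hX', hY', f, g, hhh, mem⟩ := t.exists_triangle T.obj₂ 0 1 rfl
  have hg : g = 0 := by
    obtain ⟨g₁, hg₁⟩ := Triangle.yoneda_exact₂ T hT g (tzero_s12 t _ 0 1 (by omega) h1 hY')
    rw [hg₁, tzero_s12 t g₁ 0 1 (by omega) h3 hY', comp_zero]
  have hzero : IsZero Y' := by
    obtain ⟨g₂, hg₂⟩ := Triangle.yoneda_exact₃ _ mem (𝟙 Y')
      (by show g ≫ 𝟙 Y' = 0; rw [hg, zero_comp])
    have hg₂0 : g₂ = 0 :=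
      tzero_s12 t g₂ (-1) 1 (by omega) (t.le_shift 0 1 (-1) (by omega) X' hX') hY'
    rw [IsZero.iff_id_eq_zero, hg₂, hg₂0, comp_zero]
    rfl
  have hiso : IsIso (Triangle.mk f g hhh).mor₁ := (Triangle.isZero₃_iff_isIso₁ _ mem).1 hzero
  have hiso' : IsIso f := hiso
  exact (t.le 0).prop_of_iso (asIso f) hX'

lemma ge_two_of_ext (t : TStructure D) (T : Triangle D) (hT : T ∈ distTriang D)
    (h1 : t.ge 0 T.obj₁) (h3 : t.ge 0 T.obj₃) : t.ge 0 T.obj₂ := by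
  obtain ⟨X', Y', hX', hY', f, g, hhh, mem⟩ := t.exists_triangle T.obj₂ (-1) 0 (by omega)
  have hf : f = 0 := by
    obtain ⟨g₁, hg₁⟩ := Triangle.coyoneda_exact₂ T hT f (tzero_s12 t _ (-1) 0 (by omega) hX' h3)
    rw [hg₁, tzero_s12 t g₁ (-1) 0 (by omega) hX' h1, zero_comp]
  have hzero : IsZero X' := by
    obtain ⟨g₂, hg₂⟩ := Triangle.coyoneda_exact₂ _ (inv_rot_of_distTriang _ mem) (𝟙 X')
      (by show 𝟙 X' ≫ f = 0; rw [hf, comp_zero])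
    have hg₂0 : g₂ = 0 :=
      tzero_s12 t g₂ (-1) 1 (by omega) hX' (t.ge_shift 0 (-1) 1 (by omega) Y' hY')
    rw [IsZero.iff_id_eq_zero, hg₂, hg₂0, zero_comp]
    rfl
  have hiso : IsIso (Triangle.mk f g hhh).mor₂ := (Triangle.isZero₁_iff_isIso₂ _ mem).1 hzero
  have hiso' : IsIso g := hiso
  exact (t.ge 0).prop_of_iso (asIso g).symm hY'

lemma heartProp_obj_s12 (t : TStructure D) (h : HeartData A D t) (X : A) :
    t.le 0 (h.ι.obj X) ∧ t.ge 0 (h.ι.obj X) :=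
  (h.essImage_iff _).1 ⟨X, ⟨Iso.refl _⟩⟩

lemma exists_ses_of_hom (t : TStructure D) (h : HeartData A D t) {X Y : A}
    (c : h.ι.obj X ⟶ (h.ι.obj Y)⟦(1 : ℤ)⟧) :
    ∃ s : SES A X Y, Triangle.mk (h.ι.map s.i) (h.ι.map s.p) c ∈ distTriang D := by
  haveI := h.full; haveI := h.faithful; haveI := h.additive
  obtain ⟨E, f, g, mem⟩ := distinguished_cocone_triangle₂ c
  have hE1 : t.le 0 E := le_two_of_ext t _ mem (heartProp_obj_s12 t h Y).1 (heartProp_obj_s12 t h X).1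
  have hE2 : t.ge 0 E := ge_two_of_ext t _ mem (heartProp_obj_s12 t h Y).2 (heartProp_obj_s12 t h X).2
  obtain ⟨E₀, ⟨α⟩⟩ := (h.essImage_iff E).2 ⟨hE1, hE2⟩
  have mem' : Triangle.mk (f ≫ α.inv) (α.hom ≫ g) c ∈ distTriang D := by
    refine isomorphic_distinguished _ mem _ ?_
    refine Triangle.isoMk _ _ (Iso.refl _) α (Iso.refl _) ?_ ?_ ?_
    · show (f ≫ α.inv) ≫ α.hom = 𝟙 (h.ι.obj Y) ≫ f; simp
    · show (α.hom ≫ g) ≫ 𝟙 (h.ι.obj X) = α.hom ≫ g; simp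
    · show c ≫ (shiftFunctor D 1).map (𝟙 (h.ι.obj Y)) = 𝟙 (h.ι.obj X) ≫ c; simp
  set i₀ : Y ⟶ E₀ := h.ι.preimage (f ≫ α.inv) with hi₀
  set p₀ : E₀ ⟶ X := h.ι.preimage (α.hom ≫ g) with hp₀
  have hi : h.ι.map i₀ = f ≫ α.inv := h.ι.map_preimage _
  have hp : h.ι.map p₀ = α.hom ≫ g := h.ι.map_preimage _
  have hfg : f ≫ g = 0 := comp_distTriang_mor_zero₁₂ _ mem
  have hw : i₀ ≫ p₀ = 0 := h.ι.map_injective (by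
    rw [Functor.map_comp, hi, hp, Functor.map_zero]
    simp only [assoc, Iso.inv_hom_id_assoc, hfg])
  have hmono : Mono i₀ := by
    refine Preadditive.mono_of_cancel_zero _ (fun {W} u hu => ?_)
    have hu' : h.ι.map u ≫ (Triangle.mk (f ≫ α.inv) (α.hom ≫ g) c).invRotate.mor₂ = 0 := by
      show h.ι.map u ≫ (f ≫ α.inv) = 0
      rw [← hi, ← Functor.map_comp, hu, Functor.map_zero]
    obtain ⟨w, hw1⟩ := Triangle.coyoneda_exact₂ _ (inv_rot_of_distTriang _ mem') (h.ι.map u) hu'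
    have hw0 : w = 0 := tzero_s12 t w 0 1 (by omega) (heartProp_obj_s12 t h W).1
      (t.ge_shift 0 (-1) 1 (by omega) _ (heartProp_obj_s12 t h X).2)
    apply h.ι.map_injective
    rw [Functor.map_zero, hw1, hw0, zero_comp]
    rfl
  have hepi : Epi p₀ := by
    refine Preadditive.epi_of_cancel_zero _ (fun {W} u hu => ?_)
    have hu' : (Triangle.mk (f ≫ α.inv) (α.hom ≫ g) c).mor₂ ≫ h.ι.map u = 0 := by
      show (α.hom ≫ g) ≫ h.ι.map u = 0
      rw [← hp, ← Functor.map_comp, hu, Functor.map_zero]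
    obtain ⟨w, hw1⟩ := Triangle.yoneda_exact₃ _ mem' (h.ι.map u) hu'
    have hw0 : w = 0 := tzero_s12 t w (-1) 0 (by omega)
      (t.le_shift 0 1 (-1) (by omega) _ (heartProp_obj_s12 t h Y).1) (heartProp_obj_s12 t h W).2
    apply h.ι.map_injective
    rw [Functor.map_zero, hw1, hw0, comp_zero]
    rfl
  haveI := hmono
  have hker : IsLimit (KernelFork.ofι i₀ hw) := by
    refine KernelFork.IsLimit.ofι' i₀ hw (fun {W} k hk => ?_)
    have hk' : h.ι.map k ≫ (Triangle.mk (f ≫ α.inv) (α.hom ≫ g) c).mor₂ = 0 := by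
      show h.ι.map k ≫ (α.hom ≫ g) = 0
      rw [← hp, ← Functor.map_comp, hk, Functor.map_zero]
    have hex : ∃ a : h.ι.obj W ⟶ h.ι.obj Y, h.ι.map k = a ≫ (f ≫ α.inv) :=
      Triangle.coyoneda_exact₂ _ mem' (h.ι.map k) hk'
    refine ⟨h.ι.preimage hex.choose, h.ι.map_injective ?_⟩
    rw [Functor.map_comp, hi, h.ι.map_preimage]
    exact hex.choose_spec.symm
  refine ⟨⟨E₀, i₀, p₀, hw, ?_⟩, ?_⟩
  · exact { exact := ShortComplex.exact_of_f_is_kernel _ hker, mono_f := hmono, epi_g := hepi }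
  · show Triangle.mk (h.ι.map i₀) (h.ι.map p₀) c ∈ distTriang D
    rw [hi, hp]
    exact mem'

lemma extSeq_one {X Y : A} (ξ : ExtSeq A 1 X Y) : ∃ s, ξ = ExtSeq.base s := by
  cases ξ with
  | base s => exact ⟨s, rfl⟩
  | splice s ξ' => cases ξ'

lemma extSeq_two {X Y : A} (ξ : ExtSeq A 2 X Y) :
    ∃ (Z : A) (s : SES A Z Y) (s₁ : SES A X Z), ξ = ExtSeq.splice s (ExtSeq.base s₁) := by
  cases ξ with
  | splice s ξ' =>
    obtain ⟨s₁, rfl⟩ := extSeq_one ξ'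
    exact ⟨_, s, s₁, rfl⟩

variable {DbA : Type*} [Category DbA] [HasZeroObject DbA] [Preadditive DbA] [HasShift DbA ℤ]
  [∀ n : ℤ, (shiftFunctor DbA n).Additive] [Pretriangulated DbA]

/-- `θ¹` of a short exact sequence, with target `Σ¹` (with `(1 : ℤ)` rather than `((1:ℕ):ℤ)`). -/
noncomputable def theta1 (dd : DerivedData A DbA) {X Y : A} (s : SES A X Y) :
    dd.heart.ι.obj X ⟶ (dd.heart.ι.obj Y)⟦(1 : ℤ)⟧ :=
  dd.θ 1 X Y (.base s) ≫
    eqToHom (show (dd.heart.ι.obj Y)⟦((1:ℕ) : ℤ)⟧ = (dd.heart.ι.obj Y)⟦(1 : ℤ)⟧ by norm_num)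

lemma theta1_triangle (dd : DerivedData A DbA) {X Y : A} (s : SES A X Y) :
    Triangle.mk (dd.heart.ι.map s.i) (dd.heart.ι.map s.p) (theta1 dd s) ∈ distTriang DbA :=
  dd.can.base s

variable {t : TStructure D}

/-- The comparison map `Hom(X, Σⁿ Y) → Hom(X, Σⁿ Y)` induced by `F`. -/
noncomputable def phiMap (dd : DerivedData A DbA) (h : HeartData A D t)
    (F : DbA ⥤ D) [F.CommShift ℤ] (e : dd.heart.ι ⋙ F ≅ h.ι) (n : ℤ) {X Y : A}
    (g : dd.heart.ι.obj X ⟶ (dd.heart.ι.obj Y)⟦n⟧) : h.ι.obj X ⟶ (h.ι.obj Y)⟦n⟧ :=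
  e.inv.app X ≫ F.map g ≫ (F.commShiftIso n).hom.app (dd.heart.ι.obj Y) ≫ (e.hom.app Y)⟦n⟧'

variable (dd : DerivedData A DbA) (h : HeartData A D t)
  (F : DbA ⥤ D) [F.CommShift ℤ] [F.IsTriangulated] (e : dd.heart.ι ⋙ F ≅ h.ι)

lemma phiMap_comp_left (n : ℤ) {X X' Y : A} (u : X' ⟶ X)
    (g : dd.heart.ι.obj X ⟶ (dd.heart.ι.obj Y)⟦n⟧) :
    phiMap dd h F e n (dd.heart.ι.map u ≫ g) = h.ι.map u ≫ phiMap dd h F e n g := by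
  dsimp [phiMap]
  rw [F.map_comp]
  have hnat := e.inv.naturality u
  dsimp at hnat
  simp only [assoc]
  rw [← reassoc_of% hnat]

lemma phi_triangle {X Y : A} (s : SES A X Y) :
    Triangle.mk (h.ι.map s.i) (h.ι.map s.p) (phiMap dd h F e 1 (theta1 dd s)) ∈
      distTriang D := by
  have mem := F.map_distinguished _ (theta1_triangle dd s)
  refine isomorphic_distinguished _ mem _ ?_
  refine Triangle.isoMk _ _ ((e.app Y).symm) ((e.app s.E).symm) ((e.app X).symm) ?_ ?_ ?_
  · exact e.inv.naturality s.i
  · exact e.inv.naturality s.p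
  · show phiMap dd h F e 1 (theta1 dd s) ≫ (shiftFunctor D (1:ℤ)).map (e.inv.app Y) =
      e.inv.app X ≫ (F.map (theta1 dd s) ≫ (F.commShiftIso (1:ℤ)).hom.app (dd.heart.ι.obj Y))
    dsimp [phiMap]
    simp only [assoc, ← Functor.map_comp, Iso.hom_inv_id_app]
    simp

lemma key1 (X Y : A) :
    Function.Bijective (fun g : dd.heart.ι.obj X ⟶ (dd.heart.ι.obj Y)⟦(1:ℤ)⟧ =>
      phiMap dd h F e 1 g) := by
  haveI := h.full; haveI := h.faithful; haveI := h.additive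
  constructor
  · intro g g' hgg
    obtain ⟨ξq, hξ⟩ := (dd.bij 1 le_rfl X Y).2 g
    obtain ⟨ξ, rfl⟩ := Quot.exists_rep ξq
    obtain ⟨s, rfl⟩ := extSeq_one ξ
    obtain ⟨ξq', hξ'⟩ := (dd.bij 1 le_rfl X Y).2 g'
    obtain ⟨ξ', rfl⟩ := Quot.exists_rep ξq'
    obtain ⟨s', rfl⟩ := extSeq_one ξ'
    have hs : theta1 dd s = g := by
      have h1 : dd.θ 1 X Y (.base s) = g := hξ
      rw [theta1, h1]
      exact comp_id g
    have hs' : theta1 dd s' = g' := by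
      have h1 : dd.θ 1 X Y (.base s') = g' := hξ'
      rw [theta1, h1]
      exact comp_id g'
    have T1 := phi_triangle dd h F e s
    have T2 := phi_triangle dd h F e s'
    have hmor : phiMap dd h F e 1 (theta1 dd s) = phiMap dd h F e 1 (theta1 dd s') := by
      rw [hs, hs']
      exact hgg
    obtain ⟨b, hb1, hb2⟩ : ∃ b : h.ι.obj s.E ⟶ h.ι.obj s'.E,
        h.ι.map s.i ≫ b = 𝟙 (h.ι.obj Y) ≫ h.ι.map s'.i ∧
          h.ι.map s.p ≫ 𝟙 (h.ι.obj X) = b ≫ h.ι.map s'.p :=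
      complete_distinguished_triangle_morphism₂ _ _ T1 T2 (𝟙 _) (𝟙 _)
      (by
        show phiMap dd h F e 1 (theta1 dd s) ≫ (shiftFunctor D (1:ℤ)).map (𝟙 (h.ι.obj Y)) =
          𝟙 (h.ι.obj X) ≫ phiMap dd h F e 1 (theta1 dd s')
        simpa using hmor)
    have hE : ExtHom A (𝟙 Y) (𝟙 X) (ExtSeq.base s) (ExtSeq.base s') := by
      refine ExtHom.base s s' (h.ι.preimage b) ?_ ?_
      · apply h.ι.map_injective
        rw [Functor.map_comp, Functor.map_comp, h.ι.map_preimage]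
        simpa using hb1
      · apply h.ι.map_injective
        rw [Functor.map_comp, Functor.map_comp, h.ι.map_preimage]
        simpa using hb2
    have := congrArg (thetaBar dd.θ dd.can 1 X Y) (Quot.sound hE)
    rw [← hξ, ← hξ']
    exact this
  · intro c
    obtain ⟨s, memc⟩ := exists_ses_of_hom t h c
    have memθ := phi_triangle dd h F e s
    obtain ⟨γ, hγ1, hγ2⟩ : ∃ γ : h.ι.obj X ⟶ h.ι.obj X,
        h.ι.map s.p ≫ γ = 𝟙 (h.ι.obj s.E) ≫ h.ι.map s.p ∧
          c ≫ (shiftFunctor D (1:ℤ)).map (𝟙 (h.ι.obj Y)) = γ ≫ phiMap dd h F e 1 (theta1 dd s) :=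
      complete_distinguished_triangle_morphism _ _ memc memθ (𝟙 _) (𝟙 _)
      (by show h.ι.map s.i ≫ 𝟙 (h.ι.obj s.E) = 𝟙 (h.ι.obj Y) ≫ h.ι.map s.i; rw [id_comp, comp_id])
    have hc : c = γ ≫ phiMap dd h F e 1 (theta1 dd s) := by simpa using hγ2
    refine ⟨dd.heart.ι.map (h.ι.preimage γ) ≫ theta1 dd s, ?_⟩
    show phiMap dd h F e 1 _ = c
    rw [phiMap_comp_left, h.ι.map_preimage]
    exact hc.symm

lemma key2 (X Y : A) :
    Function.Injective (fun g : dd.heart.ι.obj X ⟶ (dd.heart.ι.obj Y)⟦(2:ℤ)⟧ =>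
      phiMap dd h F e 2 g) := by
  intro g g' hgg
  have hF : F.map g = F.map g' := by
    dsimp [phiMap] at hgg
    rw [cancel_epi (e.inv.app X)] at hgg
    simp only [← assoc] at hgg
    rwa [cancel_mono, cancel_mono] at hgg
  have hsub : F.map (g - g') = 0 := by rw [F.map_sub, hF, sub_self]
  rw [← sub_eq_zero]
  set g₀ := g - g' with hg₀def
  obtain ⟨ξq, hξ⟩ := (dd.bij 2 (by norm_num) X Y).2 g₀
  obtain ⟨ξ, rfl⟩ := Quot.exists_rep ξq
  obtain ⟨Z, s, s₁, rfl⟩ := extSeq_two ξ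
  have hθ2 : dd.θ 2 X Y (ExtSeq.splice s (ExtSeq.base s₁)) = g₀ := hξ
  have hsp := dd.can.splice (n := 1) s (ExtSeq.base s₁)
  have hath : theta1 dd s₁ = dd.θ 1 X Z (ExtSeq.base s₁) := comp_id _
  have hbth : theta1 dd s = dd.θ 1 Z Y (ExtSeq.base s) := comp_id _
  have hg₀ : g₀ = theta1 dd s₁ ≫ (shiftFunctor DbA (1:ℤ)).map (theta1 dd s) ≫
      (shiftFunctorAdd' DbA (1:ℤ) (1:ℤ) (2:ℤ) (by norm_num)).inv.app (dd.heart.ι.obj Y) := by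
    rw [← hθ2, hsp, hath, hbth]
    rfl
  set a := theta1 dd s₁ with ha
  set b := theta1 dd s with hb
  set J : ((dd.heart.ι.obj Y)⟦(1:ℤ)⟧)⟦(1:ℤ)⟧ ⟶ (dd.heart.ι.obj Y)⟦(2:ℤ)⟧ :=
    (shiftFunctorAdd' DbA (1:ℤ) (1:ℤ) (2:ℤ) (by norm_num)).inv.app (dd.heart.ι.obj Y) with hJ
  have h1 : F.map (a ≫ (shiftFunctor DbA (1:ℤ)).map b ≫ J) = 0 := by
    rw [← hg₀]
    exact hsub
  haveI : IsIso J := by rw [hJ]; infer_instance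
  have h3 : F.map a ≫ F.map ((shiftFunctor DbA (1:ℤ)).map b) = 0 := by
    rw [F.map_comp, F.map_comp, ← assoc] at h1
    rwa [CategoryTheory.Preadditive.IsIso.comp_right_eq_zero] at h1
  have hnat : F.map ((shiftFunctor DbA (1:ℤ)).map b) ≫
      (F.commShiftIso (1:ℤ)).hom.app ((dd.heart.ι.obj Y)⟦(1:ℤ)⟧) =
      (F.commShiftIso (1:ℤ)).hom.app (dd.heart.ι.obj Z) ≫
        (shiftFunctor D (1:ℤ)).map (F.map b) :=
    F.commShiftIso_hom_naturality b 1
  have h4 : F.map a ≫ (F.commShiftIso (1:ℤ)).hom.app (dd.heart.ι.obj Z) ≫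
      (shiftFunctor D (1:ℤ)).map
        (F.map b ≫ (F.commShiftIso (1:ℤ)).hom.app (dd.heart.ι.obj Y)) = 0 := by
    rw [Functor.map_comp]
    rw [← reassoc_of% hnat, reassoc_of% h3]
    simp
  have memT := F.map_distinguished _ (theta1_triangle dd s)
  have memT2 := rot_of_distTriang _ (rot_of_distTriang _ memT)
  obtain ⟨w, hw⟩ : ∃ w : F.obj (dd.heart.ι.obj X) ⟶ (F.obj (dd.heart.ι.obj s.E))⟦(1:ℤ)⟧,
      F.map a ≫ (F.commShiftIso (1:ℤ)).hom.app (dd.heart.ι.obj Z) =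
        w ≫ (-((shiftFunctor D (1:ℤ)).map (F.map (dd.heart.ι.map s.p)))) :=
    Triangle.coyoneda_exact₁ _ memT2
    (F.map a ≫ (F.commShiftIso (1:ℤ)).hom.app (dd.heart.ι.obj Z)) (by
      show (F.map a ≫ (F.commShiftIso (1:ℤ)).hom.app (dd.heart.ι.obj Z)) ≫
        (shiftFunctor D (1:ℤ)).map (F.map b ≫ (F.commShiftIso (1:ℤ)).hom.app (dd.heart.ι.obj Y)) = 0
      rw [assoc]; exact h4)
  have hw' : F.map a ≫ (F.commShiftIso (1:ℤ)).hom.app (dd.heart.ι.obj Z) =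
      (-w) ≫ (shiftFunctor D (1:ℤ)).map (F.map (dd.heart.ι.map s.p)) := by
    rw [hw]
    show w ≫ (-((shiftFunctor D (1:ℤ)).map (F.map (dd.heart.ι.map s.p)))) = _
    rw [Preadditive.comp_neg, Preadditive.neg_comp]
  obtain ⟨w₀, hw₀⟩ := (key1 dd h F e X s.E).2
    (e.inv.app X ≫ (-w) ≫ (shiftFunctor D (1:ℤ)).map (e.hom.app s.E))
  have hFw₀ : F.map w₀ ≫ (F.commShiftIso (1:ℤ)).hom.app (dd.heart.ι.obj s.E) = -w := by
    dsimp [phiMap] at hw₀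
    rw [cancel_epi (e.inv.app X)] at hw₀
    refine (cancel_mono ((shiftFunctor D (1:ℤ)).map (e.hom.app s.E))).1 ?_
    simpa using hw₀
  have hnat2 : F.map ((shiftFunctor DbA (1:ℤ)).map (dd.heart.ι.map s.p)) ≫
      (F.commShiftIso (1:ℤ)).hom.app (dd.heart.ι.obj Z) =
      (F.commShiftIso (1:ℤ)).hom.app (dd.heart.ι.obj s.E) ≫
        (shiftFunctor D (1:ℤ)).map (F.map (dd.heart.ι.map s.p)) :=
    F.commShiftIso_hom_naturality (dd.heart.ι.map s.p) 1
  have hkey : F.map a ≫ (F.commShiftIso (1:ℤ)).hom.app (dd.heart.ι.obj Z) =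
      F.map (w₀ ≫ (shiftFunctor DbA (1:ℤ)).map (dd.heart.ι.map s.p)) ≫
        (F.commShiftIso (1:ℤ)).hom.app (dd.heart.ι.obj Z) := by
    rw [hw', ← hFw₀, Functor.map_comp]
    simp only [assoc]
    rw [hnat2]
  have hFa : F.map a = F.map (w₀ ≫ (shiftFunctor DbA (1:ℤ)).map (dd.heart.ι.map s.p)) :=
    (cancel_mono _).1 hkey
  have haw : a = w₀ ≫ (shiftFunctor DbA (1:ℤ)).map (dd.heart.ι.map s.p) := by
    apply (key1 dd h F e X Z).1
    show e.inv.app X ≫ F.map a ≫ _ = e.inv.app X ≫ F.map _ ≫ _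
    rw [hFa]
  have hpb : dd.heart.ι.map s.p ≫ b = 0 := comp_distTriang_mor_zero₂₃ _ (theta1_triangle dd s)
  rw [hg₀, haw]
  simp only [assoc, ← Functor.map_comp_assoc, hpb]
  simp

end Statement12Aux

/-- A realization functor `F : D^b(A) → D` induces an isomorphism
`Ext^1_A(X, Y) → Hom_D(X, Σ Y)` and an injection `Ext^2_A(X, Y) → Hom_D(X, Σ² Y)`,
where `Ext^n_A(X, Y) = Hom_{D^b(A)}(X, Σ^n Y)`. -/
theorem statement_12 {A : Type*} [Category A] [Abelian A]
    {DbA : Type*} [Category DbA] [HasZeroObject DbA] [Preadditive DbA] [HasShift DbA ℤ]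
    [∀ n : ℤ, (shiftFunctor DbA n).Additive] [Pretriangulated DbA]
    {D : Type*} [Category D] [HasZeroObject D] [Preadditive D] [HasShift D ℤ]
    [∀ n : ℤ, (shiftFunctor D n).Additive] [Pretriangulated D]
    (dd : DerivedData A DbA)
    (t : TStructure D) (hb : IsBoundedTStructure D t) (h : HeartData A D t)
    (F : DbA ⥤ D) [F.CommShift ℤ] [F.IsTriangulated] (e : dd.heart.ι ⋙ F ≅ h.ι)
    (X Y : A) :
    Function.Bijective (fun g : dd.heart.ι.obj X ⟶ (dd.heart.ι.obj Y)⟦(1 : ℤ)⟧ =>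
        e.inv.app X ≫ F.map g ≫ (F.commShiftIso (1 : ℤ)).hom.app (dd.heart.ι.obj Y) ≫
          (e.hom.app Y)⟦(1 : ℤ)⟧') ∧
    Function.Injective (fun g : dd.heart.ι.obj X ⟶ (dd.heart.ι.obj Y)⟦(2 : ℤ)⟧ =>
        e.inv.app X ≫ F.map g ≫ (F.commShiftIso (2 : ℤ)).hom.app (dd.heart.ι.obj Y) ≫
          (e.hom.app Y)⟦(2 : ℤ)⟧') := by
  exact ⟨key1 dd h F e X Y, key2 dd h F e X Y⟩

end HRS
end

section
/- Let A and A' be abelian categories with torsion pairs (T, F) and (T', F') respectively, and let G : A' → A be an additive functor such that: (1) G is exact with G(T') ⊆ T and G(F') ⊆ F; (2) the restrictions G|_{T'} and G|_{F'} are fully faithful; (3) for all F' ∈ F', T' ∈ T', G induces a surjection Hom_{A'}(F', T') → Hom_A(G F', G T') and an injection Yext^1_{A'}(F', T') → Yext^1_A(G F', G T'). Then G is fully faithful. -/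
open CategoryTheory Category Limits Pretriangulated Triangulated ZeroObject

namespace HRS

variable (A : Type*) [Category A] [Abelian A]

variable (D : Type*) [Category D] [HasZeroObject D] [Preadditive D] [HasShift D ℤ]
  [∀ n : ℤ, (shiftFunctor D n).Additive] [Pretriangulated D]

variable {A D}

variable (A D)

variable {A D}

section Lemma29Aux

open Limits

variable {C : Type*} [Category C] [Abelian C]

/-- The canonical mono `Y ⟶ Y' ⊞ E` used to construct the pushout of an extension
`0 ⟶ Y ⟶ E ⟶ X ⟶ 0` along `a : Y ⟶ Y'`. -/
noncomputable def pushK {X Y Y' : C} (s : SES C X Y) (a : Y ⟶ Y') : Y ⟶ Y' ⊞ s.E :=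
  biprod.lift a (-s.i)

lemma pushK_mono {X Y Y' : C} (s : SES C X Y) (a : Y ⟶ Y') : Mono (pushK s a) := by
  haveI := s.ex.mono_f
  refine Preadditive.mono_of_cancel_zero _ (fun g hg => ?_)
  have h2 : g ≫ s.i = 0 := by
    have h := hg =≫ (biprod.snd : Y' ⊞ s.E ⟶ s.E)
    simpa [pushK] using h
  exact zero_of_comp_mono s.i h2

lemma pushAux_shortExact {X Y Y' : C} (s : SES C X Y) (a : Y ⟶ Y') :
    (ShortComplex.mk (pushK s a) (cokernel.π (pushK s a))
      (cokernel.condition _)).ShortExact :=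
  { exact := ShortComplex.exact_of_g_is_cokernel _ (cokernelIsCokernel _)
    mono_f := pushK_mono s a
    epi_g := inferInstance }

lemma push_i_comm {X Y Y' : C} (s : SES C X Y) (a : Y ⟶ Y') :
    s.i ≫ biprod.inr ≫ cokernel.π (pushK s a)
      = a ≫ biprod.inl ≫ cokernel.π (pushK s a) := by
  have h : biprod.lift a (-s.i) ≫ cokernel.π (pushK s a) = 0 := cokernel.condition _
  rw [biprod.lift_eq] at h
  simp only [Preadditive.add_comp, Preadditive.neg_comp, Category.assoc,
    add_neg_eq_zero] at h
  exact h.symm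

/-- Pushout of an extension `0 ⟶ Y ⟶ E ⟶ X ⟶ 0` along `a : Y ⟶ Y'`. -/
noncomputable def pushSES {X Y Y' : C} (s : SES C X Y) (a : Y ⟶ Y') : SES C X Y' where
  E := cokernel (pushK s a)
  i := biprod.inl ≫ cokernel.π _
  p := cokernel.desc _ (biprod.desc 0 s.p) (by simp [pushK, s.w])
  w := by simp
  ex := by
    haveI := s.ex.mono_f
    haveI := s.ex.epi_g
    have hmono : Mono (biprod.inl ≫ cokernel.π (pushK s a)) := by
      refine Preadditive.mono_of_cancel_zero _ (fun g hg => ?_)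
      obtain ⟨l, hl⟩ := KernelFork.IsLimit.lift' (pushAux_shortExact s a).fIsKernel
        (g ≫ biprod.inl) (by simpa using hg)
      have hl' : l ≫ pushK s a = g ≫ biprod.inl := by simpa using hl
      have hl0 : l = 0 := by
        have h := hl' =≫ (biprod.snd : Y' ⊞ s.E ⟶ s.E)
        simp [pushK] at h
        exact zero_of_comp_mono s.i h
      have h := hl' =≫ (biprod.fst : Y' ⊞ s.E ⟶ Y')
      simp [pushK, hl0] at h
      exact h.symm
    have hepi : Epi (cokernel.desc (pushK s a) (biprod.desc 0 s.p)
        (by simp [pushK, s.w])) := by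
      refine epi_of_epi_fac (f := biprod.inr ≫ cokernel.π (pushK s a)) (h := s.p) (w := by simp)
    refine ShortComplex.ShortExact.mk' (ShortComplex.exact_of_g_is_cokernel _ ?_) hmono hepi
    refine CokernelCofork.IsColimit.ofπ' _ _ (fun {W} h hh => ?_) (hp := hepi)
    have hh' : biprod.inl ≫ cokernel.π (pushK s a) ≫ h = 0 := by simpa using hh
    obtain ⟨d, hd⟩ := CokernelCofork.IsColimit.desc' s.ex.gIsCokernel
      (biprod.inr ≫ cokernel.π (pushK s a) ≫ h) (by
        show s.i ≫ biprod.inr ≫ cokernel.π (pushK s a) ≫ h = 0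
        have h1 := push_i_comm s a =≫ h
        simp only [Category.assoc] at h1
        rw [h1, hh', comp_zero])
    have hd' : s.p ≫ d = biprod.inr ≫ cokernel.π (pushK s a) ≫ h := by simpa using hd
    refine ⟨d, ?_⟩
    rw [← cancel_epi (cokernel.π (pushK s a))]
    simp only [Category.assoc]
    have htot : (biprod.fst ≫ biprod.inl + biprod.snd ≫ biprod.inr : Y' ⊞ s.E ⟶ _)
      = 𝟙 _ := biprod.total
    have hstep : cokernel.π (pushK s a) ≫ cokernel.desc (pushK s a) (biprod.desc 0 s.p)
        (by simp [pushK, s.w]) ≫ d = biprod.snd ≫ s.p ≫ d := by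
      rw [← Category.assoc, cokernel.π_desc, biprod.desc_eq]
      simp
    rw [hstep, hd']
    conv_rhs => rw [← Category.id_comp (cokernel.π (pushK s a)), ← htot]
    simp only [Preadditive.add_comp, Category.assoc, hh', comp_zero, zero_add]

lemma push_p_comm {X Y Y' : C} (s : SES C X Y) (a : Y ⟶ Y') :
    (biprod.inr ≫ cokernel.π (pushK s a)) ≫ (pushSES s a).p = s.p := by
  simp [pushSES]

/-- The canonical epi `E ⊞ X' ⟶ X` used to construct the pullback of an extension
`0 ⟶ Y ⟶ E ⟶ X ⟶ 0` along `b : X' ⟶ X`. -/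
noncomputable def pullC {X X' Y : C} (s : SES C X Y) (b : X' ⟶ X) : s.E ⊞ X' ⟶ X :=
  biprod.desc s.p (-b)

lemma pullC_epi {X X' Y : C} (s : SES C X Y) (b : X' ⟶ X) : Epi (pullC s b) := by
  haveI := s.ex.epi_g
  exact epi_of_epi_fac (f := (biprod.inl : s.E ⟶ s.E ⊞ X')) (h := s.p) (w := by simp [pullC])

lemma pullAux_shortExact {X X' Y : C} (s : SES C X Y) (b : X' ⟶ X) :
    (ShortComplex.mk (kernel.ι (pullC s b)) (pullC s b)
      (kernel.condition _)).ShortExact :=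
  { exact := ShortComplex.exact_of_f_is_kernel _ (kernelIsKernel _)
    mono_f := inferInstance
    epi_g := pullC_epi s b }

lemma pull_p_comm {X X' Y : C} (s : SES C X Y) (b : X' ⟶ X) :
    kernel.ι (pullC s b) ≫ biprod.fst ≫ s.p
      = kernel.ι (pullC s b) ≫ biprod.snd ≫ b := by
  have h : kernel.ι (pullC s b) ≫ biprod.desc s.p (-b) = 0 := kernel.condition _
  rw [biprod.desc_eq] at h
  simp only [Preadditive.comp_add, Preadditive.comp_neg, Category.assoc,
    add_neg_eq_zero, neg_neg] at h
  simpa only [Category.assoc] using h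

/-- Pullback of an extension `0 ⟶ Y ⟶ E ⟶ X ⟶ 0` along `b : X' ⟶ X`. -/
noncomputable def pullSES {X X' Y : C} (s : SES C X Y) (b : X' ⟶ X) : SES C X' Y where
  E := kernel (pullC s b)
  i := kernel.lift _ (s.i ≫ biprod.inl) (by simp [pullC, s.w])
  p := kernel.ι _ ≫ biprod.snd
  w := by simp
  ex := by
    haveI := s.ex.mono_f
    haveI := s.ex.epi_g
    have hmono : Mono (kernel.lift (pullC s b) (s.i ≫ biprod.inl)
        (by simp [pullC, s.w])) := by
      refine mono_of_mono_fac (f := kernel.ι (pullC s b)) (h := s.i ≫ biprod.inl) (w := by simp)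
    have hepi : Epi (kernel.ι (pullC s b) ≫ biprod.snd) := by
      refine Preadditive.epi_of_cancel_zero _ (fun g hg => ?_)
      obtain ⟨r, hr⟩ := CokernelCofork.IsColimit.desc' (pullAux_shortExact s b).gIsCokernel
        (biprod.snd ≫ g) (by simpa using hg)
      have hr' : pullC s b ≫ r = biprod.snd ≫ g := by simpa using hr
      have hr0 : r = 0 := by
        have h := biprod.inl ≫= hr'
        simp [pullC] at h
        exact zero_of_epi_comp s.p h
      have h := biprod.inr ≫= hr'
      simp [pullC, hr0] at h
      exact h.symm
    refine ShortComplex.ShortExact.mk' (ShortComplex.exact_of_f_is_kernel _ ?_) hmono hepi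
    refine KernelFork.IsLimit.ofι' _ _ (fun {W} g hg => ?_) (hi := hmono)
    have hg' : g ≫ kernel.ι (pullC s b) ≫ biprod.snd = 0 := by simpa using hg
    obtain ⟨l, hl⟩ := KernelFork.IsLimit.lift' s.ex.fIsKernel
      (g ≫ kernel.ι (pullC s b) ≫ biprod.fst) (by
        show (g ≫ kernel.ι (pullC s b) ≫ biprod.fst) ≫ s.p = 0
        have h1 := g ≫= pull_p_comm s b
        have h2 := hg' =≫ b
        simp only [Category.assoc] at h1 h2 ⊢
        rw [zero_comp] at h2
        rw [h1, h2])
    have hl' : l ≫ s.i = g ≫ kernel.ι (pullC s b) ≫ biprod.fst := by simpa using hl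
    refine ⟨l, ?_⟩
    rw [← cancel_mono (kernel.ι (pullC s b))]
    simp only [Category.assoc]
    have htot : (biprod.fst ≫ biprod.inl + biprod.snd ≫ biprod.inr : s.E ⊞ X' ⟶ _)
      = 𝟙 _ := biprod.total
    have hstep : l ≫ kernel.lift (pullC s b) (s.i ≫ biprod.inl)
        (by simp [pullC, s.w]) ≫ kernel.ι (pullC s b) = l ≫ s.i ≫ biprod.inl := by
      rw [kernel.lift_ι]
    rw [hstep, ← Category.assoc, hl']
    conv_rhs => rw [← Category.comp_id (kernel.ι (pullC s b)), ← htot]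
    have hg'' := hg' =≫ (biprod.inr : X' ⟶ s.E ⊞ X')
    simp only [Category.assoc, zero_comp] at hg''
    simp only [Preadditive.comp_add, Category.assoc, hg'', comp_zero, add_zero]

lemma pull_i_comm {X X' Y : C} (s : SES C X Y) (b : X' ⟶ X) :
    (pullSES s b).i ≫ kernel.ι (pullC s b) ≫ biprod.fst = s.i := by
  simp [pullSES]

/-- The relation of isomorphism of extensions (with identity on the end terms). -/
def SESIso {X Y : C} (s s' : SES C X Y) : Prop :=
  ∃ e : s.E ⟶ s'.E, IsIso e ∧ s.i ≫ e = s'.i ∧ e ≫ s'.p = s.p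

lemma SESIso.refl {X Y : C} (s : SES C X Y) : SESIso s s :=
  ⟨𝟙 _, inferInstance, by simp, by simp⟩

lemma SESIso.symm {X Y : C} {s s' : SES C X Y} (h : SESIso s s') : SESIso s' s := by
  obtain ⟨e, he, h1, h2⟩ := h
  exact ⟨inv e, inferInstance, by rw [← h1]; simp, by rw [← h2]; simp⟩

lemma SESIso.trans {X Y : C} {s s' s'' : SES C X Y} (h : SESIso s s') (h' : SESIso s' s'') :
    SESIso s s'' := by
  obtain ⟨e, he, h1, h2⟩ := h
  obtain ⟨e', he', h1', h2'⟩ := h'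
  exact ⟨e ≫ e', inferInstance, by rw [← Category.assoc, h1, h1'],
    by rw [Category.assoc, h2', h2]⟩

/-- An `ExtHom` between two 1-extensions over identity end maps gives an isomorphism
of extensions (five lemma). -/
lemma SESIso.of_extHom {X Y : C} {s s' : SES C X Y}
    (h : ExtHom C (𝟙 Y) (𝟙 X) (.base s) (.base s')) : SESIso s s' := by
  cases h with
  | base _ _ e h1 h2 =>
    rw [Category.id_comp] at h1
    rw [Category.comp_id] at h2
    haveI := s.ex.mono_f
    haveI := s.ex.epi_g
    haveI := s'.ex.mono_f
    haveI := s'.ex.epi_g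
    haveI hm : Mono e := by
      refine Preadditive.mono_of_cancel_zero _ (fun g hg => ?_)
      obtain ⟨l, hl⟩ := KernelFork.IsLimit.lift' s.ex.fIsKernel g (by
        show g ≫ s.p = 0
        rw [h2, ← Category.assoc, hg, zero_comp])
      have hl' : l ≫ s.i = g := by simpa using hl
      have hl0 : l = 0 := by
        refine zero_of_comp_mono s'.i ?_
        rw [← h1, ← Category.assoc, hl', hg]
      rw [← hl', hl0, zero_comp]
    haveI he : Epi e := by
      refine Preadditive.epi_of_cancel_zero _ (fun g hg => ?_)
      obtain ⟨r, hr⟩ := CokernelCofork.IsColimit.desc' s'.ex.gIsCokernel g (by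
        show s'.i ≫ g = 0
        rw [← h1, Category.assoc, hg, comp_zero])
      have hr' : s'.p ≫ r = g := by simpa using hr
      have hr0 : r = 0 := by
        refine zero_of_epi_comp s.p ?_
        rw [h2, Category.assoc, hr']
        exact hg
      rw [← hr', hr0, comp_zero]
    exact ⟨e, isIso_of_mono_of_epi e, h1, h2.symm⟩

/-- Extract the underlying short exact sequence of a 1-fold extension. -/
def seqSES {X Y : C} : ExtSeq C 1 X Y → SES C X Y
  | .base s => s
  | .splice _ ξ => nomatch ξ

lemma SESIso.of_extHom' {X Y : C} {ξ ξ' : ExtSeq C 1 X Y}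
    (h : ExtHom C (𝟙 Y) (𝟙 X) ξ ξ') : SESIso (seqSES ξ) (seqSES ξ') := by
  cases h with
  | base s s' e h1 h2 => exact SESIso.of_extHom (ExtHom.base s s' e h1 h2)
  | splice t s s' ζ ζ' e h1 h2 h => exact nomatch ζ

lemma SESIso.of_extEquiv {X Y : C} {s s' : SES C X Y}
    (h : ExtEquiv C (.base s) (.base s')) : SESIso s s' := by
  have key : ∀ (ξ ξ' : ExtSeq C 1 X Y), ExtEquiv C ξ ξ' → SESIso (seqSES ξ) (seqSES ξ') := by
    intro ξ ξ' h
    induction h with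
    | rel _ _ hr => exact SESIso.of_extHom' hr
    | refl _ => exact SESIso.refl _
    | symm _ _ _ ih => exact ih.symm
    | trans _ _ _ _ _ ih1 ih2 => exact ih1.trans ih2
  exact key _ _ h

end Lemma29Aux


section Lemma29Main

variable {A₀ A₁ : Type*} [Category A₀] [Abelian A₀] [Category A₁] [Abelian A₁]

lemma G_biprod_hom_ext (G : A₁ ⥤ A₀) [G.Additive] {P Q : A₁} {W : A₀}
    {f g : G.obj (P ⊞ Q) ⟶ W}
    (h1 : G.map biprod.inl ≫ f = G.map biprod.inl ≫ g)
    (h2 : G.map biprod.inr ≫ f = G.map biprod.inr ≫ g) : f = g := by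
  have htot : (biprod.fst ≫ biprod.inl + biprod.snd ≫ biprod.inr : P ⊞ Q ⟶ _) = 𝟙 _ :=
    biprod.total
  have key : G.map (𝟙 (P ⊞ Q)) ≫ f = G.map (𝟙 (P ⊞ Q)) ≫ g := by
    rw [← htot, Functor.map_add, G.map_comp, G.map_comp, Preadditive.add_comp,
      Preadditive.add_comp, Category.assoc, Category.assoc, Category.assoc, Category.assoc,
      h1, h2]
  simpa using key

lemma map_epi_of_exact (G : A₁ ⥤ A₀) [G.Additive]
    (hex : ∀ S : ShortComplex A₁, S.ShortExact → (S.map G).ShortExact)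
    {X Y : A₁} (p : X ⟶ Y) [Epi p] : Epi (G.map p) :=
  (hex (ShortComplex.mk (kernel.ι p) p (kernel.condition p))
    { exact := ShortComplex.exact_of_f_is_kernel _ (kernelIsKernel p)
      mono_f := inferInstance
      epi_g := inferInstance }).epi_g

lemma map_mono_of_exact (G : A₁ ⥤ A₀) [G.Additive]
    (hex : ∀ S : ShortComplex A₁, S.ShortExact → (S.map G).ShortExact)
    {X Y : A₁} (i : X ⟶ Y) [Mono i] : Mono (G.map i) :=
  (hex (ShortComplex.mk i (cokernel.π i) (cokernel.condition i))
    { exact := ShortComplex.exact_of_g_is_cokernel _ (cokernelIsCokernel i)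
      mono_f := inferInstance
      epi_g := inferInstance }).mono_f

/-- The key construction: a morphism `u : G E ⟶ G E'` compatible with `G`-images of maps
on the two torsion parts yields a morphism of extensions over identity end maps, between
the `G`-image of the pushout extension and the `G`-image of the pullback extension. -/
lemma extHom_of_middle (G : A₁ ⥤ A₀) [G.Additive]
    (hex : ∀ S : ShortComplex A₁, S.ShortExact → (S.map G).ShortExact)
    {fX tX fY tY : A₁} (sX : SES A₁ fX tX) (sY : SES A₁ fY tY)
    (vt : tX ⟶ tY) (vf : fX ⟶ fY) (u : G.obj sX.E ⟶ G.obj sY.E)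
    (h1 : G.map sX.i ≫ u = G.map vt ≫ G.map sY.i)
    (h2 : u ≫ G.map sY.p = G.map sX.p ≫ G.map vf) :
    ExtHom A₀ (𝟙 (G.obj tY)) (𝟙 (G.obj fX))
      (.base (mapSES A₀ G hex (pushSES sX vt))) (.base (mapSES A₀ G hex (pullSES sY vf))) := by
  haveI hmonoGι : Mono (G.map (kernel.ι (pullC sY vf))) :=
    (hex _ (pullAux_shortExact sY vf)).mono_f
  haveI hepiGπ : Epi (G.map (cokernel.π (pushK sX vt))) :=
    (hex _ (pushAux_shortExact sX vt)).epi_g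
  set M : G.obj (tY ⊞ sX.E) ⟶ G.obj (sY.E ⊞ fX) :=
    G.map (biprod.fst ≫ sY.i ≫ biprod.inl)
      + G.map (biprod.snd : tY ⊞ sX.E ⟶ sX.E) ≫ u ≫ G.map (biprod.inl : sY.E ⟶ sY.E ⊞ fX)
      + G.map (biprod.snd ≫ sX.p ≫ biprod.inr) with hM
  have hMl : G.map (biprod.inl : tY ⟶ tY ⊞ sX.E) ≫ M = G.map (sY.i ≫ biprod.inl) := by
    rw [hM]
    simp only [Preadditive.comp_add, ← Functor.map_comp_assoc, ← Functor.map_comp]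
    simp
  have hMr : G.map (biprod.inr : sX.E ⟶ tY ⊞ sX.E) ≫ M
      = u ≫ G.map (biprod.inl : sY.E ⟶ sY.E ⊞ fX) + G.map (sX.p ≫ biprod.inr) := by
    rw [hM]
    simp only [Preadditive.comp_add, ← Functor.map_comp_assoc, ← Functor.map_comp]
    simp
  have hMc : M ≫ G.map (pullC sY vf) = 0 := by
    refine G_biprod_hom_ext G ?_ ?_
    · rw [← Category.assoc, hMl, comp_zero, ← Functor.map_comp]
      have : (sY.i ≫ biprod.inl) ≫ pullC sY vf = 0 := by
        simp [pullC, sY.w]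
      rw [this, Functor.map_zero]
    · rw [← Category.assoc, hMr, comp_zero, Preadditive.add_comp, Category.assoc,
        ← Functor.map_comp, ← Functor.map_comp]
      have e1 : (biprod.inl : sY.E ⟶ sY.E ⊞ fX) ≫ pullC sY vf = sY.p := by simp [pullC]
      have e2 : (sX.p ≫ biprod.inr) ≫ pullC sY vf = -(sX.p ≫ vf) := by
        simp [pullC]
      rw [e1, e2, h2, Functor.map_neg, Functor.map_comp, add_neg_eq_zero]
  obtain ⟨m, hm⟩ : { m : G.obj (tY ⊞ sX.E) ⟶ G.obj (kernel (pullC sY vf)) //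
      m ≫ G.map (kernel.ι (pullC sY vf)) = M } := KernelFork.IsLimit.lift' (hex _ (pullAux_shortExact sY vf)).fIsKernel M
    (show M ≫ G.map (pullC sY vf) = 0 from hMc)
  have hm' : m ≫ G.map (kernel.ι (pullC sY vf)) = M := by simpa using hm
  have e1 : pushK sX vt ≫ (biprod.fst : tY ⊞ sX.E ⟶ tY) ≫ sY.i ≫
      (biprod.inl : sY.E ⟶ sY.E ⊞ fX)
      = vt ≫ sY.i ≫ (biprod.inl : sY.E ⟶ sY.E ⊞ fX) := by
    rw [← Category.assoc, ← Category.assoc, ← Category.assoc]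
    congr 2
    simp [pushK]
  have e2 : pushK sX vt ≫ (biprod.snd : tY ⊞ sX.E ⟶ sX.E) = -sX.i := by simp [pushK]
  have e3 : pushK sX vt ≫ (biprod.snd : tY ⊞ sX.E ⟶ sX.E) ≫ sX.p ≫
      (biprod.inr : fX ⟶ sY.E ⊞ fX) = 0 := by
    rw [← Category.assoc, e2, Preadditive.neg_comp, ← Category.assoc, sX.w, zero_comp,
      neg_zero]
  have hkm' : G.map (pushK sX vt) ≫ M = 0 := by
    calc G.map (pushK sX vt) ≫ M
        = G.map (vt ≫ sY.i ≫ (biprod.inl : sY.E ⟶ sY.E ⊞ fX))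
            + G.map (-sX.i) ≫ u ≫ G.map (biprod.inl : sY.E ⟶ sY.E ⊞ fX)
            + G.map (pushK sX vt ≫ (biprod.snd : tY ⊞ sX.E ⟶ sX.E) ≫ sX.p ≫
                (biprod.inr : fX ⟶ sY.E ⊞ fX)) := by
          rw [hM, Preadditive.comp_add, Preadditive.comp_add, ← Functor.map_comp, e1,
            ← Functor.map_comp_assoc, e2, ← Functor.map_comp]
      _ = 0 := by
          rw [e3, Functor.map_zero, add_zero, Functor.map_neg, Preadditive.neg_comp,
            Functor.map_comp, Functor.map_comp, ← Category.assoc, ← h1]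
          simp [add_neg_eq_zero]
  have hkm : G.map (pushK sX vt) ≫ m = 0 := by
    rw [← cancel_mono (G.map (kernel.ι (pullC sY vf))), Category.assoc, hm', zero_comp]
    exact hkm'
  obtain ⟨e, he⟩ : { e : G.obj (cokernel (pushK sX vt)) ⟶ G.obj (kernel (pullC sY vf)) //
      G.map (cokernel.π (pushK sX vt)) ≫ e = m } := CokernelCofork.IsColimit.desc' (hex _ (pushAux_shortExact sX vt)).gIsCokernel
    m (show G.map (pushK sX vt) ≫ m = 0 from hkm)
  have he' : G.map (cokernel.π (pushK sX vt)) ≫ e = m := by simpa using he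
  have hgoal1 : G.map (biprod.inl ≫ cokernel.π (pushK sX vt)) ≫ e
      = 𝟙 (G.obj tY) ≫ G.map (kernel.lift (pullC sY vf) (sY.i ≫ biprod.inl)
        (by simp [pullC, sY.w])) := by
    rw [Category.id_comp, ← cancel_mono (G.map (kernel.ι (pullC sY vf))), Functor.map_comp,
      Category.assoc, Category.assoc, reassoc_of% he', hm', hMl, ← Functor.map_comp,
      kernel.lift_ι]
  have hgoal2 : G.map (pushSES sX vt).p ≫ 𝟙 (G.obj fX)
      = e ≫ G.map (kernel.ι (pullC sY vf) ≫ biprod.snd) := by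
    have hl : cokernel.π (pushK sX vt) ≫ (pushSES sX vt).p = biprod.desc 0 sX.p := by
      simp [pushSES]
    rw [Category.comp_id]
    erw [← cancel_epi (G.map (cokernel.π (pushK sX vt))), ← Functor.map_comp, hl]
    rw [reassoc_of% he', Functor.map_comp, reassoc_of% hm']
    refine G_biprod_hom_ext G ?_ ?_
    · rw [← Functor.map_comp, biprod.inl_desc, Functor.map_zero, ← Category.assoc, hMl,
        ← Functor.map_comp]
      simp
    · rw [← Functor.map_comp, biprod.inr_desc, ← Category.assoc, hMr, Preadditive.add_comp,
        Category.assoc, ← Functor.map_comp, ← Functor.map_comp]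
      simp
  exact ExtHom.base _ _ e hgoal1 hgoal2

/-- From an isomorphism between the pushout of `s` along `a` and the pullback of `s'`
along `b`, produce a morphism of extensions over `(a, b)`. -/
lemma exists_middle {C : Type*} [Category C] [Abelian C] {x y x' y' : C}
    (s : SES C x y) (s' : SES C x' y') (a : y ⟶ y') (b : x ⟶ x')
    (h : SESIso (pushSES s a) (pullSES s' b)) :
    ∃ w : s.E ⟶ s'.E, s.i ≫ w = a ≫ s'.i ∧ w ≫ s'.p = s.p ≫ b := by
  obtain ⟨(e : cokernel (pushK s a) ⟶ kernel (pullC s' b)), he, h1, h2⟩ := h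
  have h1' : (biprod.inl ≫ cokernel.π (pushK s a)) ≫ e
      = kernel.lift (pullC s' b) (s'.i ≫ biprod.inl) (by simp [pullC, s'.w]) := h1
  have h2' : e ≫ kernel.ι (pullC s' b) ≫ biprod.snd
      = cokernel.desc (pushK s a) (biprod.desc 0 s.p) (by simp [pushK, s.w]) := h2
  refine ⟨(biprod.inr ≫ cokernel.π (pushK s a)) ≫ e ≫ kernel.ι (pullC s' b) ≫ biprod.fst,
    ?_, ?_⟩
  · have c1 := push_i_comm s a
    have c2 := pull_i_comm s' b
    calc s.i ≫ (biprod.inr ≫ cokernel.π (pushK s a)) ≫ e ≫ kernel.ι (pullC s' b) ≫ biprod.fst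
        = (s.i ≫ biprod.inr ≫ cokernel.π (pushK s a)) ≫ e ≫ kernel.ι (pullC s' b) ≫
            biprod.fst := by simp only [Category.assoc]
      _ = (a ≫ biprod.inl ≫ cokernel.π (pushK s a)) ≫ e ≫ kernel.ι (pullC s' b) ≫
            biprod.fst := by rw [c1]
      _ = a ≫ ((biprod.inl ≫ cokernel.π (pushK s a)) ≫ e) ≫ kernel.ι (pullC s' b) ≫
            biprod.fst := by simp only [Category.assoc]
      _ = a ≫ kernel.lift (pullC s' b) (s'.i ≫ biprod.inl) (by simp [pullC, s'.w]) ≫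
            kernel.ι (pullC s' b) ≫ biprod.fst := by rw [h1']
      _ = a ≫ s'.i := by simp
  · have c3 := pull_p_comm s' b
    calc ((biprod.inr ≫ cokernel.π (pushK s a)) ≫ e ≫ kernel.ι (pullC s' b) ≫ biprod.fst) ≫
          s'.p
        = (biprod.inr ≫ cokernel.π (pushK s a)) ≫ e ≫ kernel.ι (pullC s' b) ≫
            biprod.fst ≫ s'.p := by simp only [Category.assoc]
      _ = (biprod.inr ≫ cokernel.π (pushK s a)) ≫ e ≫ kernel.ι (pullC s' b) ≫
            biprod.snd ≫ b := by rw [c3]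
      _ = (biprod.inr ≫ cokernel.π (pushK s a)) ≫ (e ≫ kernel.ι (pullC s' b) ≫
            biprod.snd) ≫ b := by simp only [Category.assoc]
      _ = (biprod.inr ≫ cokernel.π (pushK s a)) ≫ cokernel.desc (pushK s a)
            (biprod.desc 0 s.p) (by simp [pushK, s.w]) ≫ b := by rw [h2']
      _ = s.p ≫ b := by
          have : (biprod.inr ≫ cokernel.π (pushK s a)) ≫ cokernel.desc (pushK s a)
              (biprod.desc 0 s.p) (by simp [pushK, s.w]) = s.p := by simp
          rw [← Category.assoc, this]

end Lemma29Main

/-- A fully-faithfulness criterion for an exact functor compatible with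
torsion pairs (Lemma 2.9 of the paper). -/
theorem statement_15 {A A' : Type*} [Category A] [Abelian A] [Category A'] [Abelian A']
    {T F : A → Prop} {T' F' : A' → Prop}
    (tpA : TorsionPair A T F) (tpA' : TorsionPair A' T' F')
    (G : A' ⥤ A) [G.Additive]
    (hex : ∀ S : ShortComplex A', S.ShortExact → (S.map G).ShortExact)
    (hT : ∀ x : A', T' x → T (G.obj x)) (hF : ∀ x : A', F' x → F (G.obj x))
    (hffT : ∀ x y : A', T' x → T' y → Function.Bijective (fun g : x ⟶ y => G.map g))
    (hffF : ∀ x y : A', F' x → F' y → Function.Bijective (fun g : x ⟶ y => G.map g))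
    (hsurj : ∀ f t : A', F' f → T' t → Function.Surjective (fun g : f ⟶ t => G.map g))
    (hinj : ∀ f t : A', F' f → T' t → ∀ s s' : SES A' f t,
      ExtEquiv A (.base (mapSES A G hex s)) (.base (mapSES A G hex s')) →
        ExtEquiv A' (.base s) (.base s')) :
    G.Full ∧ G.Faithful := by
  have hzero : ∀ {X Y : A'} (g : X ⟶ Y), G.map g = 0 → g = 0 := by
    intro X Y g hg
    have hfac : Abelian.factorThruImage g ≫ Abelian.image.ι g = g := Abelian.image.fac g
    haveI hGe : Epi (G.map (Abelian.factorThruImage g)) := map_epi_of_exact G hex _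
    haveI hGm : Mono (G.map (Abelian.image.ι g)) := map_mono_of_exact G hex _
    have h1 : G.map (Abelian.factorThruImage g) ≫ G.map (Abelian.image.ι g) = 0 := by
      rw [← Functor.map_comp, hfac, hg]
    have h2 : G.map (Abelian.image.ι g) = 0 := zero_of_epi_comp _ h1
    have hz : IsZero (G.obj (Abelian.image g)) := by
      rw [IsZero.iff_id_eq_zero]
      exact zero_of_comp_mono (G.map (Abelian.image.ι g)) (by rw [Category.id_comp, h2])
    obtain ⟨t, f, i, p, w, hTt, hFf, hse⟩ := tpA'.exists_ses (Abelian.image g)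
    haveI := hse.mono_f
    haveI := hse.epi_g
    have htz : IsZero t := by
      rw [IsZero.iff_id_eq_zero]
      haveI hGi : Mono (G.map i) := map_mono_of_exact G hex i
      have hid : 𝟙 (G.obj t) = 0 := by
        refine zero_of_comp_mono (G.map i) ?_
        rw [Category.id_comp]
        exact hz.eq_of_tgt _ _
      refine (hffT t t hTt hTt).1 ?_
      show G.map (𝟙 t) = G.map 0
      rw [CategoryTheory.Functor.map_id, CategoryTheory.Functor.map_zero, hid]
    have hfz : IsZero f := by
      rw [IsZero.iff_id_eq_zero]
      haveI hGp : Epi (G.map p) := map_epi_of_exact G hex p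
      have hid : 𝟙 (G.obj f) = 0 := by
        refine zero_of_epi_comp (G.map p) ?_
        rw [Category.comp_id]
        exact hz.eq_of_src _ _
      refine (hffF f f hFf hFf).1 ?_
      show G.map (𝟙 f) = G.map 0
      rw [CategoryTheory.Functor.map_id, CategoryTheory.Functor.map_zero, hid]
    have him : IsZero (Abelian.image g) := by
      rw [IsZero.iff_id_eq_zero]
      have hp0 : p = 0 := hfz.eq_of_tgt _ _
      obtain ⟨l, hl⟩ := KernelFork.IsLimit.lift' hse.fIsKernel (𝟙 _) (by
        show 𝟙 _ ≫ p = 0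
        rw [hp0, comp_zero])
      have hl' : l ≫ i = 𝟙 _ := by simpa using hl
      have hli : l ≫ i = l ≫ (0 : t ⟶ Abelian.image g) := l ≫= (htz.eq_of_src i 0)
      rw [← hl', hli, comp_zero]
    rw [← hfac, him.eq_of_src (Abelian.image.ι g) 0, comp_zero]
  constructor
  · constructor
    intro X Y u
    obtain ⟨tX, fX, iX, pX, wX, hTX, hFX, exX⟩ := tpA'.exists_ses X
    obtain ⟨tY, fY, iY, pY, wY, hTY, hFY, exY⟩ := tpA'.exists_ses Y
    let sX : SES A' fX tX := ⟨X, iX, pX, wX, exX⟩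
    let sY : SES A' fY tY := ⟨Y, iY, pY, wY, exY⟩
    have h0 : G.map iX ≫ u ≫ G.map pY = 0 :=
      tpA.hom_zero (hT tX hTX) (hF fY hFY) _
    obtain ⟨ut, hut⟩ : { ut : G.obj tX ⟶ G.obj tY // ut ≫ G.map iY = G.map iX ≫ u } :=
      KernelFork.IsLimit.lift' (hex _ exY).fIsKernel (G.map iX ≫ u)
      (show (G.map iX ≫ u) ≫ G.map pY = 0 by rw [Category.assoc]; exact h0)
    have hut' : ut ≫ G.map iY = G.map iX ≫ u := by simpa using hut
    obtain ⟨vt, hvt0⟩ := (hffT tX tY hTX hTY).2 ut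
    have hvt : G.map vt = ut := hvt0
    obtain ⟨uf, huf⟩ : { uf : G.obj fX ⟶ G.obj fY // G.map pX ≫ uf = u ≫ G.map pY } :=
      CokernelCofork.IsColimit.desc' (hex _ exX).gIsCokernel (u ≫ G.map pY)
      (show G.map iX ≫ u ≫ G.map pY = 0 from h0)
    have huf' : G.map pX ≫ uf = u ≫ G.map pY := by simpa using huf
    obtain ⟨vf, hvf0⟩ := (hffF fX fY hFX hFY).2 uf
    have hvf : G.map vf = uf := hvf0
    have h1 : G.map sX.i ≫ u = G.map vt ≫ G.map sY.i := by
      show G.map iX ≫ u = G.map vt ≫ G.map iY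
      rw [hvt, hut']
    have h2 : u ≫ G.map sY.p = G.map sX.p ≫ G.map vf := by
      show u ≫ G.map pY = G.map pX ≫ G.map vf
      rw [hvf, huf']
    have hstep := extHom_of_middle G hex sX sY vt vf u h1 h2
    have hequiv : ExtEquiv A' (.base (pushSES sX vt)) (.base (pullSES sY vf)) :=
      hinj fX tY hFX hTY _ _ (Relation.EqvGen.rel _ _ hstep)
    obtain ⟨w, hw1, hw2⟩ := exists_middle sX sY vt vf (SESIso.of_extEquiv hequiv)
    have hd1 : G.map iX ≫ (u - G.map w) = 0 := by
      rw [Preadditive.comp_sub, ← Functor.map_comp]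
      have hiw : iX ≫ w = vt ≫ iY := hw1
      rw [hiw, Functor.map_comp, hvt, hut', sub_self]
    have hd2 : (u - G.map w) ≫ G.map pY = 0 := by
      rw [Preadditive.sub_comp, ← Functor.map_comp]
      have hwp : w ≫ pY = pX ≫ vf := hw2
      rw [hwp, Functor.map_comp, hvf, huf', sub_self]
    obtain ⟨d1, hd1e⟩ : { d1 : G.obj fX ⟶ G.obj Y // G.map pX ≫ d1 = u - G.map w } :=
      CokernelCofork.IsColimit.desc' (hex _ exX).gIsCokernel (u - G.map w)
      (show G.map iX ≫ (u - G.map w) = 0 from hd1)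
    have hd1f : G.map pX ≫ d1 = u - G.map w := by simpa using hd1e
    haveI : Epi (G.map pX) := (hex _ exX).epi_g
    have hd2e : d1 ≫ G.map pY = 0 := by
      rw [← cancel_epi (G.map pX), comp_zero, ← Category.assoc, hd1f, hd2]
    obtain ⟨d2, hd2f⟩ : { d2 : G.obj fX ⟶ G.obj tY // d2 ≫ G.map iY = d1 } :=
      KernelFork.IsLimit.lift' (hex _ exY).fIsKernel d1
      (show d1 ≫ G.map pY = 0 from hd2e)
    have hd2g : d2 ≫ G.map iY = d1 := by simpa using hd2f
    obtain ⟨e0, he0⟩ := hsurj fX tY hFX hTY d2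
    have he0e : G.map e0 = d2 := he0
    refine ⟨w + pX ≫ e0 ≫ iY, ?_⟩
    rw [Functor.map_add, Functor.map_comp, Functor.map_comp, he0e, hd2g, hd1f]
    abel
  · constructor
    intro X Y g g' hgg
    have hsub : G.map (g - g') = 0 := by rw [Functor.map_sub, hgg, sub_self]
    exact sub_eq_zero.mp (hzero _ hsub)

end HRS
end
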